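/- arXiv:1603.07570 — 2 statements merged into one kernel-verified Lean document; each statement's English description precedes it below -/
import Mathlib

section
/- Let (R,G) be a balanced rooted graph and let 0 < t < m(R,G). Then there exists a constant D = D(t) such that for every p = p(n) ≤ n^{−1/t}, with probability 1 − o(1) no set of |R| vertices of the binomial random graph G(n,p) spans more than D copies of (R,G). -/
open Filter Asymptotics
open scoped Classical ENNReal

noncomputable section

namespace OG

/-! ### Finite graphs, represented as subgraphs of a complete graph -/

abbrev Sub (W : Type*) := (⊤ : SimpleGraph W).Subgraph

variable {W U X : Type*}

/-- number of vertices -/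
def nverts (G : Sub W) : ℕ := G.verts.ncard

/-- number of edges -/
def nedges (G : Sub W) : ℕ := G.edgeSet.ncard

/-- the density `d(G) = e_G / v_G` -/
def dd (G : Sub W) : ℝ := (nedges G : ℝ) / (nverts G : ℝ)

/-- the `1`-density `d₁(G) = e_G / (v_G - 1)` -/
def d1 (G : Sub W) : ℝ := (nedges G : ℝ) / ((nverts G : ℝ) - 1)

/-- the `2`-density `d₂(G) = (e_G - 1)/(v_G - 2)` -/
def d2 (G : Sub W) : ℝ := ((nedges G : ℝ) - 1) / ((nverts G : ℝ) - 2)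

/-- `m(G) = max_{H ⊆ G} d(H)` -/
def mD (G : Sub W) : ℝ := ⨆ H : {H : Sub W // H ≤ G}, dd H.1

/-- `m₁(G) = max_{H ⊆ G} d₁(H)` -/
def m1D (G : Sub W) : ℝ := ⨆ H : {H : Sub W // H ≤ G}, d1 H.1

/-- `m₂(G) = max_{H ⊆ G} d₂(H)` (over subgraphs with at least one edge;
on edgeless subgraphs the convention `0/0 = 0` applies) -/
def m2D (G : Sub W) : ℝ := ⨆ H : {H : Sub W // H ≤ G ∧ 1 ≤ nedges H}, d2 H.1

/-- `G` is 2-balanced if `m₂(G) = d₂(G)`. -/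
def TwoBalanced (G : Sub W) : Prop := m2D G = d2 G

/-- the recursively defined densities `m̄ʳ₂(G)`. -/
def mbar (G : Sub W) : ℕ → ℝ
  | 0 => 0
  | 1 => mD G
  | k + 2 => ⨆ H : {H : Sub W // H ≤ G},
      (nedges H.1 : ℝ) / ((nverts H.1 : ℝ) - 2 + 1 / mbar G (k + 1))

/-- view a `SimpleGraph` on a vertex type `V` as a graph with vertex set all of `V`. -/
def toSub {V : Type*} (G : SimpleGraph V) : Sub V where
  verts := Set.univ
  Adj := G.Adj
  adj_sub := fun h => G.ne_of_adj h
  edge_vert := fun _ => Set.mem_univ _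
  symm := G.symm

/-! ### Rooted graphs -/

/-- number of edges of `G` inside the root set `R`, i.e. `e_{G[R]}`. -/
def rInEdges (R : Set W) (G : Sub W) : ℕ := {e ∈ G.edgeSet | ∀ x ∈ e, x ∈ R}.ncard

/-- the density `d(R,G) = ē_G / v̄_G` of a rooted graph (with the roots `R ∩ V(G)`). -/
def rdd (R : Set W) (G : Sub W) : ℝ :=
  ((nedges G : ℝ) - (rInEdges R G : ℝ)) / ((nverts G : ℝ) - ((G.verts ∩ R).ncard : ℝ))

/-- `m(R,G) = max_{H ⊆ G} d(R ∩ V(H), H)` -/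
def mRooted (R : Set W) (G : Sub W) : ℝ := ⨆ H : {H : Sub W // H ≤ G}, rdd R H.1

/-- a rooted graph is balanced if its density attains `m(R,G)`. -/
def BalancedRooted (R : Set W) (G : Sub W) : Prop := mRooted R G = rdd R G

/-- the rooted `2`-density `d₂(R,G,t)`, valued in `ℝ≥0∞`. -/
def d2t (R : Set W) (G : Sub W) (t : ℝ) : ℝ≥0∞ :=
  if 0 < (nverts G : ℝ) - 2 - t * (rInEdges R G : ℝ) then
    ENNReal.ofReal ((((nedges G : ℝ) - (rInEdges R G : ℝ)) - 1) /
      ((nverts G : ℝ) - 2 - t * (rInEdges R G : ℝ)))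
  else ⊤

/-- `m₂(R,G,t)`, the maximum of `d₂(R ∩ V(H), H, t)` over subgraphs `H ⊆ G` with `ē_H > 1`. -/
def m2t (R : Set W) (G : Sub W) (t : ℝ) : ℝ≥0∞ :=
  ⨆ H : {H : Sub W // H ≤ G ∧ rInEdges R H + 2 ≤ nedges H}, d2t R H.1 t


/-! ### Products of rooted graphs and the families 𝓕ᵏ -/

/-- `e` is a non-root edge of `Fg` w.r.t. the root set `R`. -/
def NRe (Fg : Sub W) (R : Set W) (e : Sym2 W) : Prop := e ∈ Fg.edgeSet ∧ ¬ ∀ x ∈ e, x ∈ R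

/-- `P` (together with the placement maps `φ`, `ψ`) is a copy of the product `(R,Fg) × (h₁h₂, H)`:
it is obtained from `Fg` by attaching to every non-root edge of `Fg` a new copy of `H`,
rooted at that edge (the edge itself being kept iff `h₁h₂ ∈ E(H)`). -/
def IsProdCopyData (Fg : Sub W) (R : Set W) (H : Sub U) (h₁ h₂ : U) (P : Sub X)
    (φ : W → X) (ψ : Sym2 W → U → X) : Prop :=
  Set.InjOn φ Fg.verts ∧
  (∀ e, NRe Fg R e → Set.InjOn (ψ e) H.verts) ∧
  (∀ e, NRe Fg R e → ∀ x y : W, e = s(x, y) →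
      ({ψ e h₁, ψ e h₂} : Set X) = {φ x, φ y}) ∧
  (∀ e e', NRe Fg R e → NRe Fg R e' → e ≠ e' →
      Disjoint (ψ e '' (H.verts \ {h₁, h₂})) (ψ e' '' (H.verts \ {h₁, h₂}))) ∧
  (∀ e, NRe Fg R e → Disjoint (ψ e '' (H.verts \ {h₁, h₂})) (φ '' Fg.verts)) ∧
  (P.verts = φ '' Fg.verts ∪ ⋃ e ∈ {e | NRe Fg R e}, ψ e '' H.verts) ∧
  (∀ x y, P.Adj x y ↔
    ((∃ p q, Fg.Adj p q ∧ p ∈ R ∧ q ∈ R ∧ x = φ p ∧ y = φ q) ∨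
      ∃ e, NRe Fg R e ∧ ∃ p q, H.Adj p q ∧ x = ψ e p ∧ y = ψ e q))

/-- `P` is a copy of the product `(R,Fg) × (h₁h₂, H)` placed by `φ`. -/
def IsProdCopy (Fg : Sub W) (R : Set W) (H : Sub U) (h₁ h₂ : U) (P : Sub X) (φ : W → X) : Prop :=
  ∃ ψ, IsProdCopyData Fg R H h₁ h₂ P φ ψ

/-- `InF F u v k G a b` : the graph `G` rooted at `(a, b)` is (a copy of) a member of
the family `𝓕ᵏ` built from the graph `F` with distinguished edge `{u,v}`.
`𝓕¹` consists of a single edge rooted at its endpoints, and for `k ≥ 2`,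
`𝓕ᵏ = { ⊔_{1 ≤ i < k} (e,F)×(eᵢ,Fᵢ*) : Fᵢ* ∈ 𝓕^{≤i} }`, the parts being joined
at the common roots and otherwise disjoint. -/
inductive InF (F : Sub ℕ) (u v : ℕ) : ℕ → Sub ℕ → ℕ → ℕ → Prop
  | base (a b : ℕ) (G : Sub ℕ) (hab : a ≠ b) (hv : G.verts = {a, b})
      (he : G.edgeSet = {s(a, b)}) : InF F u v 1 G a b
  | step (k a b : ℕ) (P : ℕ → Sub ℕ) (G : Sub ℕ)
      (j : ℕ → ℕ) (Fi : ℕ → Sub ℕ) (c d : ℕ → ℕ) (φ : ℕ → ℕ → ℕ)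
      (hk : 2 ≤ k)
      (hj : ∀ i, 1 ≤ i → i < k → 1 ≤ j i ∧ j i ≤ i)
      (hrec : ∀ i, 1 ≤ i → i < k → InF F u v (j i) (Fi i) (c i) (d i))
      (hprod : ∀ i, 1 ≤ i → i < k →
        IsProdCopy F {u, v} (Fi i) (c i) (d i) (P i) (φ i) ∧
          ({φ i u, φ i v} : Set ℕ) = {a, b})
      (hdisj : ∀ i i', 1 ≤ i → i < k → 1 ≤ i' → i' < k → i ≠ i' →
        (P i).verts ∩ (P i').verts = {a, b})
      (hG : G = ⨆ i ∈ Set.Ico 1 k, P i) : InF F u v k G a b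

/-- membership in `𝓕^{≤ m} = ∪_{1 ≤ j ≤ m} 𝓕ʲ`. -/
def InFle (F : Sub ℕ) (u v : ℕ) (m : ℕ) (G : Sub ℕ) (a b : ℕ) : Prop :=
  ∃ j, 1 ≤ j ∧ j ≤ m ∧ InF F u v j G a b


/-! ### Partite graphs, regularity -/

/-- number of edges of a `SimpleGraph`. -/
def eCnt {V : Type*} (G : SimpleGraph V) : ℕ := G.edgeSet.ncard

/-- number of edges of `G` having all endpoints inside `R`, i.e. `e_{G[R]}`. -/
def eIn {V : Type*} (G : SimpleGraph V) (R : Finset V) : ℕ :=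
  {e ∈ G.edgeSet | ∀ x ∈ e, x ∈ R}.ncard

/-- `F₋`: the graph `F` with all edges inside the root set `R` removed. -/
def Fm {V : Type*} (F : SimpleGraph V) (R : Finset V) : SimpleGraph V :=
  F.deleteEdges {e | ∀ x ∈ e, x ∈ R}

/-- edge density of the bipartite pair `(s,t)` in `G`. -/
def bidensity {V : Type*} (G : SimpleGraph V) (s t : Finset V) : ℝ :=
  ({pq : V × V | pq.1 ∈ s ∧ pq.2 ∈ t ∧ G.Adj pq.1 pq.2}.ncard : ℝ) /
    ((s.card : ℝ) * (t.card : ℝ))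

/-- the pair `(s,t)` is `(ε)`-regular in `G`: for all `s' ⊆ s`, `t' ⊆ t` with
`|s'| ≥ ε|s|`, `|t'| ≥ ε|t|` the density deviates by at most `ε` times the density of the pair. -/
def EpsRegular {V : Type*} (G : SimpleGraph V) (ε : ℝ) (s t : Finset V) : Prop :=
  ∀ s' t' : Finset V, s' ⊆ s → t' ⊆ t → ε * s.card ≤ s'.card → ε * t.card ≤ t'.card →
    |bidensity G s' t' - bidensity G s t| ≤ ε * bidensity G s t

/-- the `i`-th vertex class `V_i` of the canonical `|ι|`-partite vertex set `ι × Fin n`. -/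
def prt (ι : Type*) [Fintype ι] (n : ℕ) (i : ι) : Finset (ι × Fin n) :=
  Finset.univ.filter fun pq => pq.1 = i

variable {ι : Type*} [Fintype ι]

/-- `G` is partite w.r.t. `Fm`: its edges run only between vertex classes
corresponding to edges of `Fm`. -/
def partiteOn (Fmg : SimpleGraph ι) (n : ℕ) (G : SimpleGraph (ι × Fin n)) : Prop :=
  ∀ x y, G.Adj x y → Fmg.Adj x.1 y.1

/-- number of edges of `G` between the classes `V_i` and `V_j`. -/
def ebp (n : ℕ) (G : SimpleGraph (ι × Fin n)) (i j : ι) : ℕ :=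
  {pq : (ι × Fin n) × (ι × Fin n) | pq.1.1 = i ∧ pq.2.1 = j ∧ G.Adj pq.1 pq.2}.ncard

/-- `G ∈ 𝓖(Fmg, n, m, ε)`: `G` is `Fmg`-partite, with exactly `m` edges between classes
joined by an edge of `Fmg`, all such pairs being `(ε)`-regular. -/
def inG (Fmg : SimpleGraph ι) (n m : ℕ) (ε : ℝ) (G : SimpleGraph (ι × Fin n)) : Prop :=
  partiteOn Fmg n G ∧
    ∀ i j, Fmg.Adj i j → ebp n G i j = m ∧ EpsRegular G ε (prt ι n i) (prt ι n j)

/-- `G_R` is `(F,q,ε)`-lower-regular. -/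
def LowerReg (F : SimpleGraph ι) (R : Finset ι) (n : ℕ) (GR : Finset ((↥R) → Fin n))
    (q ε : ℝ) : Prop :=
  ∀ Wf : (↥R) → Finset (Fin n), (∀ i, ε * n ≤ ((Wf i).card : ℝ)) →
    q ^ eIn F R * ∏ i, ((Wf i).card : ℝ) ≤ ((GR.filter fun e => ∀ i, e i ∈ Wf i).card : ℝ)

/-- `G_R` is `(F,q)`-upper-extensible. -/
def UpperExt (F : SimpleGraph ι) (R : Finset ι) (n : ℕ) (GR : Finset ((↥R) → Fin n))
    (q : ℝ) : Prop :=
  ∀ S : Finset ι, S ⊆ R → ∀ g : ι → Fin n,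
    ((GR.filter fun e => ∀ i : ↥R, (i : ι) ∈ S → e i = g (i : ι)).card : ℝ) ≤
      q ^ (eIn F R - eIn F S) * (n : ℝ) ^ (R.card - S.card)

/-- the number of edges, counted with multiplicity, of the multi-hypergraph `T(G, G_R)`:
for each `e ∈ G_R` the number of partite copies of `F₋` in `G` containing the vertices of `e`. -/
def Tcount (F : SimpleGraph ι) (R : Finset ι) (n : ℕ) (G : SimpleGraph (ι × Fin n))
    (GR : Finset ((↥R) → Fin n)) : ℕ :=
  ∑ e ∈ GR, {f : ι → Fin n |
      (∀ i j, (Fm F R).Adj i j → G.Adj (i, f i) (j, f j)) ∧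
      ∀ i : ↥R, f (i : ι) = e i}.ncard

/-! ### The hypergraph 𝓔(G_R, F) and its co-degree function -/

/-- the edge set of the partite copy of `Fmg` given by the transversal `f`. -/
def copyEdges (Fmg : SimpleGraph ι) {n : ℕ} (f : ι → Fin n) : Set (Sym2 (ι × Fin n)) :=
  Sym2.map (fun i => (i, f i)) '' Fmg.edgeSet

/-- the degree in `𝓔(G_R,F)` of a set `σ` of vertices (i.e. of edges of `K_{F₋,n}`):
the number of partite copies of `F₋` whose roots form an edge of `G_R` and whose
edge set contains `σ`. -/
def degI (F : SimpleGraph ι) (R : Finset ι) {n : ℕ} (GR : Finset ((↥R) → Fin n))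
    (σ : Finset (Sym2 (ι × Fin n))) : ℕ :=
  {pf : ((↥R) → Fin n) × (ι → Fin n) |
    pf.1 ∈ GR ∧ (∀ i : ↥R, pf.2 (i : ι) = pf.1 i) ∧ ↑σ ⊆ copyEdges (Fm F R) pf.2}.ncard

/-- `d^{(j)}(v)`: the maximal degree of a `j`-set containing `v`. -/
def djI (F : SimpleGraph ι) (R : Finset ι) {n : ℕ} (GR : Finset ((↥R) → Fin n))
    (jj : ℕ) (v : Sym2 (ι × Fin n)) : ℕ :=
  ⨆ σ : {σ : Finset (Sym2 (ι × Fin n)) // v ∈ σ ∧ σ.card = jj}, degI F R GR σ.1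

/-- the co-degree function `δ(𝓔(G_R,F), τ)` of Saxton–Thomason. -/
def codegFn (F : SimpleGraph ι) (R : Finset ι) {n : ℕ} (GR : Finset ((↥R) → Fin n))
    (τ : ℝ) : ℝ :=
  if (∑ v : Sym2 (ι × Fin n), degI F R GR {v}) = 0 then 0 else
    (2 : ℝ) ^ ((eCnt (Fm F R)).choose 2 - 1) *
      ∑ jj ∈ Finset.Icc 2 (eCnt (Fm F R)),
        ((∑ v : Sym2 (ι × Fin n), (djI F R GR jj v : ℝ)) /
            (τ ^ (jj - 1) * ∑ v : Sym2 (ι × Fin n), (degI F R GR {v} : ℝ))) *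
          ((2 : ℝ) ^ ((jj - 1).choose 2))⁻¹


/-! ### The online F-avoidance game -/

/-- the edges of the complete graph `K_n`. -/
abbrev En (n : ℕ) := {e : Sym2 (Fin n) // ¬ e.IsDiag}

/-- a (deterministic) Painter strategy: given the history of previously presented
edges together with their colors, and the newly presented edge, pick a color. -/
abbrev Strategy (n r : ℕ) := List (En n × Fin r) → En n → Fin r

/-- the history (presented edges with their colors, in order) after `N` rounds of
the game in which the edges arrive in the order `π` and Painter plays `σ`. -/
def histF {n r : ℕ} (σ : Strategy n r) (π : Fin (Nat.choose n 2) → En n) :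
    ℕ → List (En n × Fin r)
  | 0 => []
  | i + 1 =>
      histF σ π i ++
        if h : i < Nat.choose n 2 then
          [(π ⟨i, h⟩, σ (histF σ π i) (π ⟨i, h⟩))]
        else []

/-- the edge `e` occurs in the history `L` with color `c`. -/
def ListColored {n r : ℕ} (L : List (En n × Fin r)) (e : Sym2 (Fin n)) (c : Fin r) : Prop :=
  ∃ pr ∈ L, (pr.1 : Sym2 (Fin n)) = e ∧ pr.2 = c

/-- the graph of all edges of color `c` in the history `L`. -/
def colorGraphL {n r : ℕ} (L : List (En n × Fin r)) (c : Fin r) : SimpleGraph (Fin n) :=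
  SimpleGraph.fromEdgeSet {e | ListColored L e c}

/-- the graph of all presented edges in the history `L`. -/
def presentedGraphL {n r : ℕ} (L : List (En n × Fin r)) : SimpleGraph (Fin n) :=
  SimpleGraph.fromEdgeSet {e | ∃ c, ListColored L e c}

/-- the graph of edges colored `c` after `N` rounds. -/
def colorGraph {n r : ℕ} (σ : Strategy n r) (π : Fin (Nat.choose n 2) → En n) (N : ℕ)
    (c : Fin r) : SimpleGraph (Fin n) :=
  colorGraphL (histF σ π N) c

/-- the probability, under an edge ordering chosen uniformly at random among all
`(n choose 2)!` orderings of the edges of `K_n`, of the event `P`. -/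
def gameProb (n : ℕ) (P : (Fin (Nat.choose n 2) → En n) → Prop) : ℝ :=
  ({π : Fin (Nat.choose n 2) → En n | Function.Bijective π ∧ P π}.ncard : ℝ) /
    ({π : Fin (Nat.choose n 2) → En n | Function.Bijective π}.ncard : ℝ)

/-- some color class after `N` rounds contains a copy of the (finite) graph `F`. -/
def MonoCopy (F : Sub ℕ) {n r : ℕ} (σ : Strategy n r) (π : Fin (Nat.choose n 2) → En n)
    (N : ℕ) : Prop :=
  ∃ (c : Fin r) (φ : ℕ → Fin n), Set.InjOn φ F.verts ∧
    ∀ x y, F.Adj x y → (colorGraph σ π N c).Adj (φ x) (φ y)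

/-- Painter survives `N` rounds: after `N` edges have been presented and colored,
no color class contains a copy of `F`. -/
def Survive {α : Type*} (F : SimpleGraph α) {n r : ℕ} (σ : Strategy n r)
    (π : Fin (Nat.choose n 2) → En n) (N : ℕ) : Prop :=
  ∀ c : Fin r, ¬ ∃ φ : α ↪ Fin n, ∀ x y, F.Adj x y → (colorGraph σ π N c).Adj (φ x) (φ y)

/-! ### The binomial random graph -/

/-- probability of the event `P` for the binomial random graph `G(n,p)`. -/
def gnpProb (n : ℕ) (p : ℝ) (P : SimpleGraph (Fin n) → Prop) : ℝ :=
  ∑ G : SimpleGraph (Fin n),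
    if P G then p ^ eCnt G * (1 - p) ^ (Nat.choose n 2 - eCnt G) else 0

/-- the number of copies of the rooted graph `(ρ, G)` (with ordered roots `ρ`) spanned by
the tuple `f` in `Γ`: embeddings of `G - G[R]` carrying the roots `ρ` to `f` in order. -/
def spanCount {α : Type*} (G : SimpleGraph α) {k : ℕ} (ρ : Fin k ↪ α) {n : ℕ}
    (Γ : SimpleGraph (Fin n)) (f : Fin k ↪ Fin n) : ℕ :=
  {φ : α → Fin n | Function.Injective φ ∧ (∀ i, φ (ρ i) = f i) ∧
    ∀ x y, G.Adj x y → ¬(x ∈ Set.range ρ ∧ y ∈ Set.range ρ) → Γ.Adj (φ x) (φ y)}.ncard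

/-! ### F*-spanning subgraphs, upper uniformity -/

/-- `G` is an `F*`-spanning subgraph of `Γ` (where `F*` is rooted at `a, b`):
every edge of `G` is the root pair of a copy of `F*` in `Γ` whose non-root vertices
avoid `V(G)`, these copies being pairwise edge-disjoint. -/
def FStarSpanning {n : ℕ} (Fs : Sub ℕ) (a b : ℕ) (Γ : SimpleGraph (Fin n))
    (G : Sub (Fin n)) : Prop :=
  ∃ κ : Sym2 (Fin n) → ℕ → Fin n,
    (∀ e ∈ G.edgeSet, Set.InjOn (κ e) Fs.verts) ∧
    (∀ e ∈ G.edgeSet, ∀ x y : Fin n, e = s(x, y) →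
      ({κ e a, κ e b} : Set (Fin n)) = {x, y}) ∧
    (∀ e ∈ G.edgeSet, ∀ w ∈ Fs.verts, w ≠ a → w ≠ b → κ e w ∉ G.verts) ∧
    (∀ e ∈ G.edgeSet, ∀ w w', Fs.Adj w w' → Γ.Adj (κ e w) (κ e w')) ∧
    (∀ e ∈ G.edgeSet, ∀ e' ∈ G.edgeSet, e ≠ e' →
      Disjoint (Sym2.map (κ e) '' Fs.edgeSet) (Sym2.map (κ e') '' Fs.edgeSet))

/-- number of edges of `G` from `s` to `t`. -/
def eBetween {V : Type*} (G : Sub V) (s t : Set V) : ℕ :=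
  {pq : V × V | pq.1 ∈ s ∧ pq.2 ∈ t ∧ G.Adj pq.1 pq.2}.ncard

/-- `G` is `(η,q)`-upper-uniform. -/
def UpperUniform {V : Type*} (G : Sub V) (η q : ℝ) : Prop :=
  ∀ s t : Set V, s ⊆ G.verts → t ⊆ G.verts → Disjoint s t →
    η * (nverts G : ℝ) ≤ (s.ncard : ℝ) → η * (nverts G : ℝ) ≤ (t.ncard : ℝ) →
    (eBetween G s t : ℝ) ≤ (1 + η) * q * (s.ncard : ℝ) * (t.ncard : ℝ)

/-! ### Dangerous copies -/

/-- `col` is a dangerous `r`-coloring of `F*₋` for `F* ∈ 𝓕ᵏ` (rooted at `a,b`):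
for some decomposition of `F*` as in the construction of `𝓕ᵏ`, the `k-1` copies of
`F₋` whose roots were identified in the construction are monochromatic, with pairwise
different colors. -/
def DangerousColoring (F : Sub ℕ) (u v : ℕ) (k : ℕ) (Fs : Sub ℕ) (a b : ℕ) (r : ℕ)
    (col : Sym2 ℕ → Fin r) : Prop :=
  k = 1 ∨ ∃ (P : ℕ → Sub ℕ) (c : ℕ → Fin r),
    Fs = (⨆ i ∈ Set.Ico 1 k, P i) ∧
    (∀ i ∈ Set.Ico 1 k, ∀ i' ∈ Set.Ico 1 k, i ≠ i' →
      c i ≠ c i' ∧ (P i).verts ∩ (P i').verts = {a, b}) ∧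
    ∀ i ∈ Set.Ico 1 k, ∃ (j : ℕ) (Fi : Sub ℕ) (c' d' : ℕ) (φ : ℕ → ℕ),
      1 ≤ j ∧ j ≤ i ∧ InF F u v j Fi c' d' ∧
      IsProdCopy F {u, v} Fi c' d' (P i) φ ∧ ({φ u, φ v} : Set ℕ) = {a, b} ∧
      ∀ x y, F.Adj x y → ¬(x ∈ ({u, v} : Set ℕ) ∧ y ∈ ({u, v} : Set ℕ)) →
        col (s(φ x, φ y)) = c i

/-- `P` is a dangerous copy of `F × (e, F*₋)` in the colored graph after `N` rounds:
a copy of the product of `F` (all edges of `F` being used) with `F*₋` rooted at `(a,b)`,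
all of whose attached copies of `F*₋` are colored according to one and the same
dangerous coloring. -/
def IsDangerousCopy (F : Sub ℕ) (u v : ℕ) (r : ℕ) (Fs : Sub ℕ) (a b : ℕ) {n : ℕ}
    (σ : Strategy n r) (π : Fin (Nat.choose n 2) → En n) (N : ℕ) (P : Sub (Fin n)) : Prop :=
  ∃ (φ : ℕ → Fin n) (ψ : Sym2 ℕ → ℕ → Fin n) (col : Sym2 ℕ → Fin r),
    IsProdCopyData F ∅ (Fs.deleteEdges {s(a, b)}) a b P φ ψ ∧
    DangerousColoring F u v r Fs a b r col ∧
    ∀ e, NRe F ∅ e → ∀ x y, (Fs.deleteEdges {s(a, b)}).Adj x y →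
      ListColored (histF σ π N) (s(ψ e x, ψ e y)) (col (s(x, y)))

/-! ### The multi-phase game -/

/-- one phase of the multi-phase game: the edges of `K_n` are scanned in the order `π`;
those belonging to the phase graph `Gph` and not previously presented are presented to
Painter (playing `σ`), who colors them immediately. -/
def phaseStep {n r : ℕ} (σ : Strategy n r) (Gph : SimpleGraph (Fin n))
    (π : Fin (Nat.choose n 2) → En n) (init : List (En n × Fin r)) :
    ℕ → List (En n × Fin r)
  | 0 => init
  | jj + 1 =>
      let L := phaseStep σ Gph π init jj
      if h : jj < Nat.choose n 2 then
        if (((π ⟨jj, h⟩ : En n) : Sym2 (Fin n)) ∈ Gph.edgeSet ∧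
            ∀ pr ∈ L, pr.1 ≠ π ⟨jj, h⟩) then
          L ++ [(π ⟨jj, h⟩, σ L (π ⟨jj, h⟩))]
        else L
      else L

/-- the history after the first `i` phases of the multi-phase game with phase graphs `Gs`
and phase edge-orderings `πs`. -/
def multiHist {n r k : ℕ} (σ : Strategy n r) (Gs : Fin k → SimpleGraph (Fin n))
    (πs : Fin k → Fin (Nat.choose n 2) → En n) : ℕ → List (En n × Fin r)
  | 0 => []
  | i + 1 =>
      if h : i < k then
        phaseStep σ (Gs ⟨i, h⟩) (πs ⟨i, h⟩) (multiHist σ Gs πs i) (Nat.choose n 2)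
      else multiHist σ Gs πs i

/-- probability of the event `P` when `k` independent copies of `G(n,p)` are sampled,
each with an independent uniformly random ordering of the edges of `K_n`. -/
def phasesProb (n k : ℕ) (p : ℝ)
    (P : (Fin k → SimpleGraph (Fin n)) → (Fin k → Fin (Nat.choose n 2) → En n) → Prop) : ℝ :=
  (∑ Gs : Fin k → SimpleGraph (Fin n), ∑ πs : Fin k → Fin (Nat.choose n 2) → En n,
      if (∀ i, Function.Bijective (πs i)) ∧ P Gs πs then
        ∏ i, p ^ eCnt (Gs i) * (1 - p) ^ (Nat.choose n 2 - eCnt (Gs i))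
      else 0) /
    ({π : Fin (Nat.choose n 2) → En n | Function.Bijective π}.ncard : ℝ) ^ k

/-- witness data for Lemma `force regular`: a `t`-partite graph `G` with classes `parts`
of size `nn`, `m` edges between classes, monochromatic in color `col`, which is
`F*`-spanning for the member `(Fs, a, b)` of `𝓕^{≤|S|+1}`. -/
structure Wit (n r t : ℕ) where
  parts : Fin t → Finset (Fin n)
  G : Sub (Fin n)
  col : Fin r
  nn : ℕ
  m : ℕ
  Fs : Sub ℕ
  a : ℕ
  b : ℕ

/-- validity of a witness for Lemma `force regular` (see `Wit`). -/
def WitValid (F : Sub ℕ) (u v : ℕ) {n r t k : ℕ} (S : Finset (Fin r)) (ε η pn : ℝ)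
    (σ : Strategy n r) (Gs : Fin k → SimpleGraph (Fin n))
    (πs : Fin k → Fin (Nat.choose n 2) → En n) (w : Wit n r t) : Prop :=
  w.col ∉ S ∧
  (∃ jj : ℕ, 1 ≤ jj ∧ jj ≤ S.card + 1 ∧ InF F u v jj w.Fs w.a w.b) ∧
  η * (n : ℝ) ≤ (w.nn : ℝ) ∧
  η * (n : ℝ) ^ nverts w.Fs * pn ^ nedges w.Fs ≤ (w.m : ℝ) ∧
  (∀ i, (w.parts i).card = w.nn) ∧
  (∀ i i', i ≠ i' → Disjoint (w.parts i) (w.parts i')) ∧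
  (∀ x y, w.G.Adj x y → ∃ i i', i ≠ i' ∧ x ∈ w.parts i ∧ y ∈ w.parts i') ∧
  (∀ i i', i ≠ i' → eBetween w.G (↑(w.parts i)) (↑(w.parts i')) = w.m ∧
      EpsRegular w.G.spanningCoe ε (w.parts i) (w.parts i')) ∧
  w.G.verts = ⋃ i, ↑(w.parts i) ∧
  (∀ x y, w.G.Adj x y → ListColored (multiHist σ Gs πs k) (s(x, y)) w.col) ∧
  FStarSpanning w.Fs w.a w.b (presentedGraphL (multiHist σ Gs πs k)) w.G

/-- an equitable partition of `Fin n` into `rr` classes. -/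
def Equitable {n rr : ℕ} (P : Fin n → Fin rr) : Prop :=
  ∀ x y : Fin rr, (P ⁻¹' {x}).ncard ≤ (P ⁻¹' {y}).ncard + 1

/-- edges of the simple graph `C` between `s` and `t`. -/
def eBetweenS {V : Type*} (C : SimpleGraph V) (s t : Set V) : ℕ :=
  {pq : V × V | pq.1 ∈ s ∧ pq.2 ∈ t ∧ C.Adj pq.1 pq.2}.ncard


def UE (n : ℕ) : Finset (Sym2 (Fin n)) := (⊤ : SimpleGraph (Fin n)).edgeFinset

lemma card_UE (n : ℕ) : (UE n).card = Nat.choose n 2 := by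
  rw [UE, SimpleGraph.card_edgeFinset_top_eq_card_choose_two, Fintype.card_fin]

lemma sum_wt_powerset {β : Type*} (x y : ℝ) (s : Finset β) :
    ∑ A ∈ s.powerset, x ^ A.card * y ^ (s.card - A.card) = (x + y) ^ s.card := by
  rw [← Finset.prod_const, Finset.prod_add]
  refine Finset.sum_congr rfl fun t ht => ?_
  rw [Finset.prod_const, Finset.prod_const, Finset.card_sdiff_of_subset (Finset.mem_powerset.1 ht)]

lemma sum_wt_powerset_one {n : ℕ} (p : ℝ) :
    ∑ A ∈ (UE n).powerset, p ^ A.card * (1 - p) ^ (Nat.choose n 2 - A.card) = 1 := by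
  have h := sum_wt_powerset p (1 - p) (UE n)
  rw [card_UE] at h
  have hx : p + (1 - p) = 1 := by ring
  rw [hx, one_pow] at h
  exact h

lemma edgeSet_fromEdgeSet_of_subset {n : ℕ} {A : Finset (Sym2 (Fin n))} (hA : A ⊆ UE n) :
    (SimpleGraph.fromEdgeSet (↑A : Set (Sym2 (Fin n)))).edgeSet = ↑A := by
  rw [SimpleGraph.edgeSet_fromEdgeSet]
  ext e
  simp only [Set.mem_diff, Finset.mem_coe, Set.mem_setOf_eq, and_iff_left_iff_imp]
  intro he
  have := hA he
  rw [UE, SimpleGraph.mem_edgeFinset, SimpleGraph.edgeSet_top] at this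
  exact this

lemma gnpProb_eq (n : ℕ) (p : ℝ) (P : SimpleGraph (Fin n) → Prop) :
    gnpProb n p P = ∑ A ∈ (UE n).powerset,
      if P (SimpleGraph.fromEdgeSet ↑A) then
        p ^ A.card * (1 - p) ^ (Nat.choose n 2 - A.card) else 0 := by
  rw [gnpProb]
  refine Finset.sum_bij' (fun G _ => G.edgeFinset) (fun A _ => SimpleGraph.fromEdgeSet ↑A)
    ?_ ?_ ?_ ?_ ?_
  · intro G _
    exact Finset.mem_powerset.2 (SimpleGraph.edgeFinset_mono le_top)
  · intro A _
    exact Finset.mem_univ _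
  · intro G _
    rw [SimpleGraph.coe_edgeFinset, SimpleGraph.fromEdgeSet_edgeSet]
  · intro A hA
    rw [Finset.mem_powerset] at hA
    have h := edgeSet_fromEdgeSet_of_subset hA
    exact Finset.coe_injective (by rw [SimpleGraph.coe_edgeFinset]; try exact h)
  · intro G _
    have h2 : eCnt G = G.edgeFinset.card := by
      rw [eCnt, ← SimpleGraph.coe_edgeFinset, Set.ncard_coe_finset]
    have h3 : SimpleGraph.fromEdgeSet (↑G.edgeFinset : Set (Sym2 (Fin n))) = G := by
      rw [SimpleGraph.coe_edgeFinset, SimpleGraph.fromEdgeSet_edgeSet]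
    rw [h3, h2]

lemma gnpProb_true (n : ℕ) (p : ℝ) : gnpProb n p (fun _ => True) = 1 := by
  rw [gnpProb_eq]
  simp only [if_true]
  exact sum_wt_powerset_one p

lemma gnpProb_add_compl (n : ℕ) (p : ℝ) (P : SimpleGraph (Fin n) → Prop) :
    gnpProb n p P + gnpProb n p (fun Γ => ¬ P Γ) = 1 := by
  rw [gnpProb_eq, gnpProb_eq, ← Finset.sum_add_distrib]
  refine Eq.trans (Finset.sum_congr rfl fun A _ => ?_) (sum_wt_powerset_one p)
  by_cases h : P (SimpleGraph.fromEdgeSet ↑A) <;> simp [h]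

lemma wt_nonneg {p : ℝ} (hp0 : 0 ≤ p) (hp1 : p ≤ 1) (a b : ℕ) :
    (0:ℝ) ≤ p ^ a * (1 - p) ^ b :=
  mul_nonneg (pow_nonneg hp0 _) (pow_nonneg (by linarith) _)

lemma gnpProb_nonneg {n : ℕ} {p : ℝ} (hp0 : 0 ≤ p) (hp1 : p ≤ 1)
    (P : SimpleGraph (Fin n) → Prop) : 0 ≤ gnpProb n p P := by
  rw [gnpProb_eq]
  refine Finset.sum_nonneg fun A _ => ?_
  split
  · exact wt_nonneg hp0 hp1 _ _
  · exact le_refl 0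

lemma gnpProb_mono {n : ℕ} {p : ℝ} (hp0 : 0 ≤ p) (hp1 : p ≤ 1)
    {P Q : SimpleGraph (Fin n) → Prop} (h : ∀ Γ, P Γ → Q Γ) :
    gnpProb n p P ≤ gnpProb n p Q := by
  rw [gnpProb_eq, gnpProb_eq]
  refine Finset.sum_le_sum fun A _ => ?_
  by_cases hPA : P (SimpleGraph.fromEdgeSet ↑A)
  · rw [if_pos hPA, if_pos (h _ hPA)]
  · rw [if_neg hPA]
    split
    · exact wt_nonneg hp0 hp1 _ _
    · exact le_refl 0

lemma gnpProb_edges (n : ℕ) {p : ℝ} (hp0 : 0 ≤ p) (hp1 : p ≤ 1) (S : Finset (Sym2 (Fin n))) :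
    gnpProb n p (fun Γ => ↑S ⊆ Γ.edgeSet) ≤ p ^ S.card := by
  by_cases hS : S ⊆ UE n
  · rw [gnpProb_eq]
    have key : ∀ A ∈ (UE n).powerset,
        (if (↑S : Set (Sym2 (Fin n))) ⊆ (SimpleGraph.fromEdgeSet ↑A).edgeSet then
          p ^ A.card * (1 - p) ^ (Nat.choose n 2 - A.card) else 0)
        = (if S ⊆ A then p ^ A.card * (1 - p) ^ (Nat.choose n 2 - A.card) else 0) := by
      intro A hA
      rw [Finset.mem_powerset] at hA
      rw [edgeSet_fromEdgeSet_of_subset hA]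
      congr 1
    rw [Finset.sum_congr rfl key, ← Finset.sum_filter]
    have key2 : ∑ A ∈ (UE n).powerset.filter (fun A => S ⊆ A),
        p ^ A.card * (1 - p) ^ (Nat.choose n 2 - A.card)
        = ∑ B ∈ (UE n \ S).powerset,
          p ^ (S.card + B.card) * (1 - p) ^ ((UE n \ S).card - B.card) := by
      refine Finset.sum_bij' (fun A _ => A \ S) (fun B _ => S ∪ B) ?_ ?_ ?_ ?_ ?_
      · intro A hA
        rw [Finset.mem_filter, Finset.mem_powerset] at hA
        exact Finset.mem_powerset.2 (Finset.sdiff_subset_sdiff hA.1 le_rfl)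
      · intro B hB
        rw [Finset.mem_powerset] at hB
        rw [Finset.mem_filter, Finset.mem_powerset]
        exact ⟨Finset.union_subset hS (hB.trans (Finset.sdiff_subset)), Finset.subset_union_left⟩
      · intro A hA
        rw [Finset.mem_filter] at hA
        rw [Finset.union_comm]
        exact Finset.sdiff_union_of_subset hA.2
      · intro B hB
        rw [Finset.mem_powerset] at hB
        exact Finset.union_sdiff_cancel_left ((Finset.subset_sdiff.1 hB).2.symm)
      · intro A hA
        rw [Finset.mem_filter, Finset.mem_powerset] at hA
        have hcards : S.card + (A \ S).card = A.card := by
          rw [add_comm]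
          exact Finset.card_sdiff_add_card_eq_card hA.2
        rw [hcards]
        congr 2
        have h1 : (UE n \ S).card = (UE n).card - S.card := Finset.card_sdiff_of_subset hS
        have h2 : (A \ S).card = A.card - S.card := Finset.card_sdiff_of_subset hA.2
        have h3 : A.card ≤ (UE n).card := Finset.card_le_card hA.1
        have h4 : S.card ≤ A.card := Finset.card_le_card hA.2
        rw [card_UE] at h1
        have h5 : A.card ≤ n.choose 2 := by rw [← card_UE n]; exact h3
        omega
    rw [key2]
    have split : ∀ B ∈ (UE n \ S).powerset,
        p ^ (S.card + B.card) * (1 - p) ^ ((UE n \ S).card - B.card)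
        = p ^ S.card * (p ^ B.card * (1 - p) ^ ((UE n \ S).card - B.card)) := by
      intro B _; rw [pow_add]; ring
    rw [Finset.sum_congr rfl split, ← Finset.mul_sum, sum_wt_powerset]
    have hx : p + (1 - p) = 1 := by ring
    rw [hx, one_pow, mul_one]
  · have hnever : ∀ Γ : SimpleGraph (Fin n), ¬ (↑S : Set (Sym2 (Fin n))) ⊆ Γ.edgeSet := by
      intro Γ hsub
      apply hS
      intro e he
      have := hsub he
      rw [UE, SimpleGraph.mem_edgeFinset, SimpleGraph.edgeSet_top]
      exact Γ.not_isDiag_of_mem_edgeSet this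
    rw [gnpProb_eq]
    have key : ∀ A ∈ (UE n).powerset,
        (if (↑S : Set (Sym2 (Fin n))) ⊆ (SimpleGraph.fromEdgeSet ↑A).edgeSet then
          p ^ A.card * (1 - p) ^ (Nat.choose n 2 - A.card) else 0) = 0 := by
      intro A _; rw [if_neg (hnever _)]
    rw [Finset.sum_congr rfl key, Finset.sum_const_zero]
    positivity

lemma gnpProb_union {n : ℕ} {p : ℝ} (hp0 : 0 ≤ p) (hp1 : p ≤ 1) {ι : Type*}
    (Ws : Finset ι) (Q : ι → SimpleGraph (Fin n) → Prop) :
    gnpProb n p (fun Γ => ∃ w ∈ Ws, Q w Γ) ≤ ∑ w ∈ Ws, gnpProb n p (Q w) := by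
  rw [gnpProb_eq]
  have h2 : ∑ w ∈ Ws, gnpProb n p (Q w) = ∑ A ∈ (UE n).powerset, ∑ w ∈ Ws,
      (if Q w (SimpleGraph.fromEdgeSet ↑A) then
        p ^ A.card * (1 - p) ^ (Nat.choose n 2 - A.card) else 0) := by
    rw [Finset.sum_comm]
    exact Finset.sum_congr rfl fun w _ => gnpProb_eq n p (Q w)
  rw [h2]
  refine Finset.sum_le_sum fun A _ => ?_
  by_cases h : ∃ w ∈ Ws, Q w (SimpleGraph.fromEdgeSet ↑A)
  · rw [if_pos h]
    obtain ⟨w, hw, hQ⟩ := h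
    have hnn : ∀ i ∈ Ws, (0:ℝ) ≤ (if Q i (SimpleGraph.fromEdgeSet ↑A) then
        p ^ A.card * (1 - p) ^ (Nat.choose n 2 - A.card) else 0) := by
      intro i _
      split
      · exact wt_nonneg hp0 hp1 _ _
      · exact le_refl 0
    have := Finset.single_le_sum hnn hw
    rw [if_pos hQ] at this
    exact this
  · rw [if_neg h]
    refine Finset.sum_nonneg fun i _ => ?_
    split
    · exact wt_nonneg hp0 hp1 _ _
    · exact le_refl 0


/-! ### auxiliary deterministic lemmas -/


section Det

variable {α : Type} [Fintype α] {G : SimpleGraph α} {k : ℕ} {ρ : Fin k ↪ α}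

instance subFinite : Finite (Sub α) := by
  have : Function.Injective (fun H : Sub α => (H.verts, H.Adj)) := by
    intro H H' h
    rw [Prod.mk.injEq] at h
    exact SimpleGraph.Subgraph.ext h.1 h.2
  exact Finite.of_injective _ this

lemma rdd_le_mRooted {H : Sub α} (hH : H ≤ toSub G) (R : Set α) :
    rdd R H ≤ mRooted R (toSub G) := by
  have hbdd : BddAbove (Set.range fun H : {H : Sub α // H ≤ toSub G} => rdd R H.1) :=
    (Set.finite_range _).bddAbove
  exact le_ciSup hbdd ⟨H, hH⟩

lemma edgeSet_toSub : (toSub G).edgeSet = G.edgeSet := by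
  ext e
  induction e using Sym2.ind with
  | _ x y => exact Iff.rfl

/-- generic splitting of a finite set by a predicate -/
lemma ncard_split {β : Type*} [Finite β] (s : Set β) (P : β → Prop) :
    {x ∈ s | P x}.ncard + {x ∈ s | ¬ P x}.ncard = s.ncard := by
  have hu : {x ∈ s | P x} ∪ {x ∈ s | ¬ P x} = s := by
    ext x
    by_cases h : P x <;> simp [h]
  have hd : Disjoint {x ∈ s | P x} {x ∈ s | ¬ P x} := by
    rw [Set.disjoint_left]
    rintro x ⟨-, hx⟩ ⟨-, hx'⟩
    exact hx' hx
  rw [← Set.ncard_union_eq hd (Set.toFinite _) (Set.toFinite _), hu]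

/-- the finset of non-root edges of `G` -/
def NRE (G : SimpleGraph α) (ρ : Fin k ↪ α) : Finset (Sym2 α) :=
  (Set.toFinite {e : Sym2 α | e ∈ G.edgeSet ∧ ¬ ∀ x ∈ e, x ∈ Set.range ρ}).toFinset

lemma mem_NRE {e : Sym2 α} :
    e ∈ NRE G ρ ↔ e ∈ G.edgeSet ∧ ¬ ∀ x ∈ e, x ∈ Set.range ρ := by
  rw [NRE, Set.Finite.mem_toFinset]; rfl

lemma nverts_toSub : nverts (toSub G) = Fintype.card α := by
  rw [nverts, toSub, Set.ncard_univ, Nat.card_eq_fintype_card]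

lemma ncard_rootset : (Set.range ⇑ρ).ncard = k := by
  rw [← Set.image_univ, Set.ncard_image_of_injective _ ρ.injective, Set.ncard_univ,
    Nat.card_eq_fintype_card, Fintype.card_fin]

lemma verts_inter_rootset : ((toSub G).verts ∩ Set.range ⇑ρ).ncard = k := by
  rw [toSub, Set.univ_inter, ncard_rootset]

lemma card_NRE_add : (NRE G ρ).card + rInEdges (Set.range ⇑ρ) (toSub G) = nedges (toSub G) := by
  have h1 : (NRE G ρ).card = {e ∈ (toSub G).edgeSet | ¬ ∀ x ∈ e, x ∈ Set.range ⇑ρ}.ncard := by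
    rw [NRE, ← Set.ncard_eq_toFinset_card _ (Set.toFinite _), edgeSet_toSub]
  rw [h1, rInEdges, nedges, add_comm]
  exact ncard_split _ _

end Det

end OG

namespace OG2
open OG

section Det2
variable {α : Type} [Fintype α] {G : SimpleGraph α} {k : ℕ} {ρ : Fin k ↪ α} {t : ℝ}

lemma basics (hbal : BalancedRooted (Set.range ⇑ρ) (toSub G)) (ht0 : 0 < t)
    (ht : t < mRooted (Set.range ⇑ρ) (toSub G)) :
    0 < (Fintype.card α : ℝ) - k ∧
    ((NRE G ρ).card : ℝ) =
      mRooted (Set.range ⇑ρ) (toSub G) * ((Fintype.card α : ℝ) - k) := by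
  set m := mRooted (Set.range ⇑ρ) (toSub G) with hm
  have hrdd : m = rdd (Set.range ⇑ρ) (toSub G) := hbal
  have hka : k ≤ Fintype.card α := by
    have := Set.ncard_le_ncard (Set.subset_univ (Set.range ⇑ρ)) Set.finite_univ
    rwa [ncard_rootset, Set.ncard_univ, Nat.card_eq_fintype_card] at this
  have hcard : ((NRE G ρ).card : ℝ)
      = (nedges (toSub G) : ℝ) - (rInEdges (Set.range ⇑ρ) (toSub G) : ℝ) := by
    have := card_NRE_add (G := G) (ρ := ρ)
    have h2 : ((NRE G ρ).card : ℝ) + (rInEdges (Set.range ⇑ρ) (toSub G) : ℝ)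
        = (nedges (toSub G) : ℝ) := by exact_mod_cast congrArg (Nat.cast : ℕ → ℝ) this
    linarith
  have hrddval : rdd (Set.range ⇑ρ) (toSub G)
      = ((NRE G ρ).card : ℝ) / ((Fintype.card α : ℝ) - k) := by
    rw [rdd, nverts_toSub, verts_inter_rootset, hcard]
  have hden : (0:ℝ) ≤ (Fintype.card α : ℝ) - k := by
    have : (k:ℝ) ≤ (Fintype.card α : ℝ) := by exact_mod_cast hka
    linarith
  have hdenne : (Fintype.card α : ℝ) - k ≠ 0 := by
    intro h0
    rw [hrdd, hrddval, h0, div_zero] at ht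
    linarith
  have hdenpos : 0 < (Fintype.card α : ℝ) - k := lt_of_le_of_ne hden (Ne.symm hdenne)
  refine ⟨hdenpos, ?_⟩
  rw [hrdd, hrddval]
  field_simp

lemma core (hbal : BalancedRooted (Set.range ⇑ρ) (toSub G))
    {n : ℕ} {f : Fin k → Fin n} {φ : α → Fin n}
    (hinj : Function.Injective φ) (hroot : ∀ i, φ (ρ i) = f i)
    (V₀ : Finset (Fin n)) (E₀ : Finset (Sym2 (Fin n)))
    (hrV : ∀ i, f i ∈ V₀) (hEV : ∀ e ∈ E₀, ∀ x ∈ e, x ∈ V₀) :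
    ((Finset.image (Sym2.map φ) (NRE G ρ) ∩ E₀).card : ℝ)
      ≤ mRooted (Set.range ⇑ρ) (toSub G) *
        (((Finset.image φ Finset.univ ∩ V₀).card : ℝ) - k) := by
  classical
  set m := mRooted (Set.range ⇑ρ) (toSub G) with hm
  set R := Set.range ⇑ρ with hR
  -- the pulled-back subgraph
  set H : OG.Sub α := {
    verts := {x : α | φ x ∈ V₀}
    Adj := fun x y => G.Adj x y ∧ ¬(x ∈ R ∧ y ∈ R) ∧ s(φ x, φ y) ∈ E₀
    adj_sub := fun h => h.1.ne
    edge_vert := fun h => hEV _ h.2.2 _ (Sym2.mem_mk_left _ _)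
    symm := ⟨fun x y h => ⟨h.1.symm, fun hc => h.2.1 ⟨hc.2, hc.1⟩, by
      rw [Sym2.eq_swap]; exact h.2.2⟩⟩ } with hH
  have hle : H ≤ toSub G := ⟨fun x _ => Set.mem_univ x, fun x y h => h.1⟩
  have hrin : rInEdges R H = 0 := by
    rw [rInEdges, Set.ncard_eq_zero (Set.toFinite _)]
    ext e
    simp only [Set.mem_setOf_eq, Set.mem_empty_iff_false, iff_false, not_and]
    induction e using Sym2.ind with
    | _ x y =>
      intro he hall
      rw [SimpleGraph.Subgraph.mem_edgeSet] at he
      exact he.2.1 ⟨hall x (Sym2.mem_mk_left _ _), hall y (Sym2.mem_mk_right _ _)⟩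
  have hverts : (nverts H : ℝ) = ((Finset.image φ Finset.univ ∩ V₀).card : ℝ) := by
    have h1 : H.verts = ↑(Finset.univ.filter fun x : α => φ x ∈ V₀) := by
      ext x; simp [hH]
    have h2 : Finset.image φ (Finset.univ.filter fun x : α => φ x ∈ V₀)
        = Finset.image φ Finset.univ ∩ V₀ := by
      ext z
      simp only [Finset.mem_image, Finset.mem_filter, Finset.mem_univ, true_and,
        Finset.mem_inter]
      constructor
      · rintro ⟨x, hx, rfl⟩; exact ⟨⟨x, rfl⟩, hx⟩
      · rintro ⟨⟨x, rfl⟩, hz⟩; exact ⟨x, hz, rfl⟩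
    rw [nverts, h1, Set.ncard_coe_finset, ← Finset.card_image_of_injective _ hinj, h2]
  have hvertsR : ((H.verts ∩ R).ncard : ℝ) = (k:ℝ) := by
    have hsub : R ⊆ H.verts := by
      rintro x ⟨i, rfl⟩
      show φ (ρ i) ∈ V₀
      rw [hroot i]; exact hrV i
    rw [Set.inter_eq_self_of_subset_right hsub]
    rw [hR, ncard_rootset]
  have hedges : (nedges H : ℝ) = ((Finset.image (Sym2.map φ) (NRE G ρ) ∩ E₀).card : ℝ) := by
    have hclaim : Sym2.map φ '' H.edgeSet
        = ↑(Finset.image (Sym2.map φ) (NRE G ρ) ∩ E₀) := by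
      ext e'
      constructor
      · rintro ⟨e, he, rfl⟩
        induction e using Sym2.ind with
        | _ x y =>
          rw [SimpleGraph.Subgraph.mem_edgeSet] at he
          rw [Finset.coe_inter, Set.mem_inter_iff, Finset.mem_coe, Finset.mem_coe,
            Finset.mem_image]
          refine ⟨⟨s(x, y), ?_, rfl⟩, ?_⟩
          · rw [mem_NRE]
            refine ⟨he.1, fun hall => he.2.1 ⟨hall x (Sym2.mem_mk_left _ _),
              hall y (Sym2.mem_mk_right _ _)⟩⟩
          · rw [Sym2.map_pair_eq]; exact he.2.2
      · intro he'
        rw [Finset.coe_inter, Set.mem_inter_iff, Finset.mem_coe, Finset.mem_coe,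
          Finset.mem_image] at he'
        obtain ⟨⟨e, heNRE, rfl⟩, hE⟩ := he'
        induction e using Sym2.ind with
        | _ x y =>
          rw [mem_NRE] at heNRE
          refine ⟨s(x, y), ?_, rfl⟩
          rw [SimpleGraph.Subgraph.mem_edgeSet]
          refine ⟨heNRE.1, fun hc => heNRE.2 ?_, by rw [← Sym2.map_pair_eq φ]; exact hE⟩
          intro z hz
          rcases Sym2.mem_iff.1 hz with rfl | rfl
          · exact hc.1
          · exact hc.2
    have : nedges H = (Finset.image (Sym2.map φ) (NRE G ρ) ∩ E₀).card := by
      rw [nedges, ← Set.ncard_image_of_injective H.edgeSet (Sym2.map.injective hinj),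
        hclaim, Set.ncard_coe_finset]
    exact_mod_cast congrArg (Nat.cast : ℕ → ℝ) this
  -- apply balancedness
  have hrle : rdd R H ≤ m := rdd_le_mRooted hle R
  have hd0 : (0:ℝ) ≤ (nverts H : ℝ) - ((H.verts ∩ R).ncard : ℝ) := by
    have : (H.verts ∩ R).ncard ≤ H.verts.ncard :=
      Set.ncard_le_ncard Set.inter_subset_left (Set.toFinite _)
    have h2 : ((H.verts ∩ R).ncard : ℝ) ≤ (nverts H : ℝ) := by
      rw [nverts]; exact_mod_cast this
    linarith
  have hmain : (nedges H : ℝ) ≤ m * ((nverts H : ℝ) - ((H.verts ∩ R).ncard : ℝ)) := by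
    rcases eq_or_lt_of_le hd0 with hd | hd
    · -- degenerate: all vertices are roots, so no edges
      have hVR : H.verts ⊆ R := by
        have : H.verts ∩ R = H.verts := by
          apply Set.eq_of_subset_of_ncard_le Set.inter_subset_left ?_ (Set.toFinite _)
          have hcast : (H.verts.ncard : ℝ) = ((H.verts ∩ R).ncard : ℝ) := by
            rw [nverts] at hd; linarith
          exact_mod_cast le_of_eq hcast
        intro x hx
        rw [← this] at hx
        exact hx.2
      have hne : nedges H = 0 := by
        rw [nedges, Set.ncard_eq_zero (Set.toFinite _)]
        ext e
        simp only [Set.mem_empty_iff_false, iff_false]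
        induction e using Sym2.ind with
        | _ x y =>
          intro he
          rw [SimpleGraph.Subgraph.mem_edgeSet] at he
          exact he.2.1 ⟨hVR (H.edge_vert he), hVR (H.edge_vert (H.symm.symm _ _ he))⟩
      rw [hne, ← hd]
      norm_num
    · have : rdd R H = (nedges H : ℝ) / ((nverts H : ℝ) - ((H.verts ∩ R).ncard : ℝ)) := by
        rw [rdd, hrin]
        norm_num
      rw [this] at hrle
      exact (div_le_iff₀ hd).1 hrle
  rw [hverts, hvertsR, hedges] at hmain
  exact hmain

end Det2
end OG2

namespace OG3
open OG OG2

section Det3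
variable {α : Type} [Fintype α] {G : SimpleGraph α} {k : ℕ} {ρ : Fin k ↪ α} {t : ℝ}

lemma union_bound (hbal : BalancedRooted (Set.range ⇑ρ) (toSub G)) (ht0 : 0 < t)
    (ht : t < mRooted (Set.range ⇑ρ) (toSub G))
    {n : ℕ} (f : Fin k → Fin n) (Φ : Finset (α → Fin n))
    (hval : ∀ φ ∈ Φ, Function.Injective φ ∧ ∀ i, φ (ρ i) = f i) :
    mRooted (Set.range ⇑ρ) (toSub G) *
        (((Φ.biUnion (fun φ => Finset.image φ Finset.univ)).card : ℝ) - k)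
      ≤ ((Φ.biUnion (fun φ => Finset.image (Sym2.map φ) (NRE G ρ))).card : ℝ) := by
  classical
  set m := mRooted (Set.range ⇑ρ) (toSub G) with hm
  obtain ⟨hden, hval2⟩ := basics hbal ht0 ht
  have hm0 : 0 < m := lt_trans ht0 ht
  induction Φ using Finset.induction_on with
  | empty =>
    rw [Finset.biUnion_empty, Finset.biUnion_empty, Finset.card_empty]
    have : (0:ℝ) ≤ (k:ℝ) := by positivity
    push_cast
    nlinarith
  | @insert φ Φ hφΦ ih =>
    have hvalΦ : ∀ ψ ∈ Φ, Function.Injective ψ ∧ ∀ i, ψ (ρ i) = f i :=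
      fun ψ hψ => hval ψ (Finset.mem_insert_of_mem hψ)
    have hφ : Function.Injective φ ∧ ∀ i, φ (ρ i) = f i :=
      hval φ (Finset.mem_insert_self _ _)
    have IH := ih hvalΦ
    rw [Finset.biUnion_insert, Finset.biUnion_insert]
    set A := Finset.image φ Finset.univ with hA
    set V := Φ.biUnion (fun ψ => Finset.image ψ Finset.univ) with hV
    set Eφ := Finset.image (Sym2.map φ) (NRE G ρ) with hEφ
    set EV := Φ.biUnion (fun ψ => Finset.image (Sym2.map ψ) (NRE G ρ)) with hEV
    have cardA : (A.card : ℝ) = (Fintype.card α : ℝ) := by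
      rw [hA, Finset.card_image_of_injective _ hφ.1, Finset.card_univ]
    have cardEφ : (Eφ.card : ℝ) = ((NRE G ρ).card : ℝ) := by
      rw [hEφ, Finset.card_image_of_injective _ (Sym2.map.injective hφ.1)]
    by_cases hΦe : Φ = ∅
    · subst hΦe
      have hVe : V = ∅ := by rw [hV]; exact Finset.biUnion_empty
      have hEVe : EV = ∅ := by rw [hEV]; exact Finset.biUnion_empty
      rw [hVe, hEVe, Finset.union_empty, Finset.union_empty, cardA, cardEφ, hval2]
    · obtain ⟨ψ, hψ⟩ := Finset.nonempty_iff_ne_empty.2 hΦe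
      -- apply the core lemma
      have hrV : ∀ i, f i ∈ V := by
        intro i
        rw [hV]
        refine Finset.mem_biUnion.2 ⟨ψ, hψ, ?_⟩
        rw [← (hvalΦ ψ hψ).2 i]
        exact Finset.mem_image_of_mem _ (Finset.mem_univ _)
      have hEVV : ∀ e ∈ EV, ∀ x ∈ e, x ∈ V := by
        intro e he x hx
        rw [hEV] at he
        obtain ⟨ψ', hψ', hmem⟩ := Finset.mem_biUnion.1 he
        obtain ⟨e₀, _, rfl⟩ := Finset.mem_image.1 hmem
        obtain ⟨z, _, rfl⟩ := Sym2.mem_map.1 hx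
        exact Finset.mem_biUnion.2 ⟨ψ', hψ', Finset.mem_image_of_mem _ (Finset.mem_univ _)⟩
      have hcore := core (G := G) (ρ := ρ) hbal hφ.1 hφ.2 V EV hrV hEVV
      rw [← hEφ, ← hA] at hcore
      -- cardinal identities
      have c1 : ((A ∪ V).card : ℝ) = ((A \ V).card : ℝ) + (V.card : ℝ) := by
        exact_mod_cast congrArg (Nat.cast : ℕ → ℝ) (Finset.card_sdiff_add_card A V).symm
      have c2 : ((Eφ ∪ EV).card : ℝ) = ((Eφ \ EV).card : ℝ) + (EV.card : ℝ) := by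
        exact_mod_cast congrArg (Nat.cast : ℕ → ℝ) (Finset.card_sdiff_add_card Eφ EV).symm
      have c3 : ((A ∩ V).card : ℝ) + ((A \ V).card : ℝ) = (A.card : ℝ) := by
        exact_mod_cast congrArg (Nat.cast : ℕ → ℝ) (Finset.card_inter_add_card_sdiff A V)
      have c4 : ((Eφ ∩ EV).card : ℝ) + ((Eφ \ EV).card : ℝ) = (Eφ.card : ℝ) := by
        exact_mod_cast congrArg (Nat.cast : ℕ → ℝ) (Finset.card_inter_add_card_sdiff Eφ EV)
      have key : m * ((A \ V).card : ℝ) ≤ ((Eφ \ EV).card : ℝ) := by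
        have e3 : ((A \ V).card : ℝ) = (Fintype.card α : ℝ) - ((A ∩ V).card : ℝ) := by
          rw [← cardA]; linarith
        calc m * ((A \ V).card : ℝ)
            = m * ((Fintype.card α : ℝ) - k) - m * (((A ∩ V).card : ℝ) - k) := by
              rw [e3]; ring
          _ ≤ m * ((Fintype.card α : ℝ) - k) - ((Eφ ∩ EV).card : ℝ) := by linarith
          _ = ((NRE G ρ).card : ℝ) - ((Eφ ∩ EV).card : ℝ) := by rw [hval2]
          _ = ((Eφ \ EV).card : ℝ) := by rw [← cardEφ]; linarith
      have expand : m * (((A ∪ V).card : ℝ) - k)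
          = m * ((A \ V).card : ℝ) + m * ((V.card : ℝ) - k) := by
        rw [c1]; ring
      linarith

lemma det_main (hbal : BalancedRooted (Set.range ⇑ρ) (toSub G)) (ht0 : 0 < t)
    (ht : t < mRooted (Set.range ⇑ρ) (toSub G)) :
    ∃ D M : ℕ, ∀ (n : ℕ) (Γ : SimpleGraph (Fin n)) (f : Fin k ↪ Fin n),
      D < spanCount G ρ Γ f →
      ∃ (Vs : Finset (Fin n)) (Es : Finset (Sym2 (Fin n))),
        ↑Es ⊆ Γ.edgeSet ∧ Es ⊆ Vs.sym2 ∧ Vs.card ≤ M ∧ t * Vs.card < (Es.card : ℝ) := by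
  classical
  set m := mRooted (Set.range ⇑ρ) (toSub G) with hm
  obtain ⟨hden, hval2⟩ := basics hbal ht0 ht
  have hm0 : 0 < m := lt_trans ht0 ht
  have hmt : 0 < m - t := by linarith
  set a := Fintype.card α with ha
  have hka : (k:ℝ) < (a:ℝ) := by linarith
  have ha0 : a ≠ 0 := by
    intro h; rw [h] at hka; simp at hka; linarith [hka, Nat.cast_nonneg (α := ℝ) k]
  set B : ℕ := Nat.ceil (m * k / (m - t)) with hB
  refine ⟨B ^ a, (B ^ a + 1) * a, ?_⟩
  intro n Γ f hcount
  -- extract B^a + 1 distinct valid maps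
  set S := {φ : α → Fin n | Function.Injective φ ∧ (∀ i, φ (ρ i) = f i) ∧
    ∀ x y, G.Adj x y → ¬(x ∈ Set.range ⇑ρ ∧ y ∈ Set.range ⇑ρ) → Γ.Adj (φ x) (φ y)} with hS
  have hSfin : S.Finite := Set.toFinite _
  have hcard : B ^ a + 1 ≤ hSfin.toFinset.card := by
    rw [← Set.ncard_eq_toFinset_card _ hSfin]
    exact hcount
  obtain ⟨Φ, hΦsub, hΦcard⟩ := Finset.exists_subset_card_eq hcard
  have hΦval : ∀ φ ∈ Φ, φ ∈ S := by
    intro φ hφ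
    have := hΦsub hφ
    rwa [Set.Finite.mem_toFinset] at this
  set Vs := Φ.biUnion (fun ψ => Finset.image ψ Finset.univ) with hVs
  set Es := Φ.biUnion (fun ψ => Finset.image (Sym2.map ψ) (NRE G ρ)) with hEs
  refine ⟨Vs, Es, ?_, ?_, ?_, ?_⟩
  · -- edges present in Γ
    intro e he
    rw [Finset.mem_coe, hEs] at he
    obtain ⟨ψ, hψ, hmem⟩ := Finset.mem_biUnion.1 he
    obtain ⟨e₀, he₀, rfl⟩ := Finset.mem_image.1 hmem
    rw [mem_NRE] at he₀
    induction e₀ using Sym2.ind with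
    | _ x y =>
      rw [Sym2.map_pair_eq, SimpleGraph.mem_edgeSet]
      refine (hΦval ψ hψ).2.2 x y (he₀.1) ?_
      intro hc
      exact he₀.2 fun z hz => by
        rcases Sym2.mem_iff.1 hz with rfl | rfl
        · exact hc.1
        · exact hc.2
  · -- edges within Vs
    intro e he
    rw [Finset.mem_sym2_iff]
    intro x hx
    rw [hEs] at he
    obtain ⟨ψ, hψ, hmem⟩ := Finset.mem_biUnion.1 he
    obtain ⟨e₀, _, rfl⟩ := Finset.mem_image.1 hmem
    obtain ⟨z, _, rfl⟩ := Sym2.mem_map.1 hx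
    exact Finset.mem_biUnion.2 ⟨ψ, hψ, Finset.mem_image_of_mem _ (Finset.mem_univ _)⟩
  · -- size bound
    calc Vs.card ≤ ∑ ψ ∈ Φ, (Finset.image ψ Finset.univ).card := Finset.card_biUnion_le
      _ ≤ ∑ _ψ ∈ Φ, a := by
        refine Finset.sum_le_sum fun ψ _ => ?_
        calc (Finset.image ψ Finset.univ).card ≤ Finset.univ.card := Finset.card_image_le
          _ = a := by rw [Finset.card_univ]
      _ = (B ^ a + 1) * a := by rw [Finset.sum_const, hΦcard, smul_eq_mul]
  · -- density
    have hcount2 : B ^ a + 1 ≤ Vs.card ^ a := by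
      have hsub : Φ ⊆ Fintype.piFinset (fun _ : α => Vs) := by
        intro ψ hψ
        rw [Fintype.mem_piFinset]
        intro x
        exact Finset.mem_biUnion.2 ⟨ψ, hψ, Finset.mem_image_of_mem _ (Finset.mem_univ _)⟩
      calc B ^ a + 1 = Φ.card := hΦcard.symm
        _ ≤ (Fintype.piFinset (fun _ : α => Vs)).card := Finset.card_le_card hsub
        _ = ∏ _x : α, Vs.card := by rw [Fintype.card_piFinset]
        _ = Vs.card ^ a := by rw [Finset.prod_const, Finset.card_univ]
    have hBlt : B < Vs.card := by
      by_contra hle2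
      push_neg at hle2
      have := Nat.pow_le_pow_left hle2 a
      omega
    have hVreal : m * (k:ℝ) / (m - t) < (Vs.card : ℝ) := by
      have h1 : (B:ℝ) < (Vs.card : ℝ) := by exact_mod_cast hBlt
      have h2 : m * (k:ℝ) / (m - t) ≤ (B:ℝ) := Nat.le_ceil _
      linarith
    have hUB := union_bound hbal ht0 ht (fun i => f i) Φ
      (fun φ hφ => ⟨(hΦval φ hφ).1, (hΦval φ hφ).2.1⟩)
    rw [← hVs, ← hEs, ← hm] at hUB
    have hmk : m * (k:ℝ) < (m - t) * (Vs.card : ℝ) := by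
      rw [div_lt_iff₀ hmt] at hVreal
      linarith
    calc t * (Vs.card : ℝ) = m * (Vs.card : ℝ) - (m - t) * (Vs.card : ℝ) := by ring
      _ < m * (Vs.card : ℝ) - m * k := by linarith
      _ = m * ((Vs.card : ℝ) - k) := by ring
      _ ≤ (Es.card : ℝ) := hUB

end Det3
end OG3

namespace OG4
open OG OG2 OG3

def Ws (n M : ℕ) (t : ℝ) : Finset (Finset (Fin n) × Finset (Sym2 (Fin n))) :=
  Finset.univ.filter (fun pr =>
    pr.1.card ≤ M ∧ pr.2 ⊆ pr.1.sym2 ∧ t * pr.1.card < (pr.2.card : ℝ))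

lemma class_card_le (n M : ℕ) (t : ℝ) (v : ℕ) (hv : v ≤ M) :
    ((Ws n M t).filter fun pr => pr.1.card = v).card ≤ n.choose v * 2 ^ ((M+1).choose 2) := by
  classical
  set T := (Finset.powersetCard v (Finset.univ : Finset (Fin n))).sigma
    (fun V => V.sym2.powerset) with hT
  have hinj : (((Ws n M t).filter fun pr => pr.1.card = v)).card ≤ T.card := by
    refine Finset.card_le_card_of_injOn
      (fun pr => (⟨pr.1, pr.2⟩ : Σ _ : Finset (Fin n), Finset (Sym2 (Fin n)))) ?_ ?_
    · intro pr hpr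
      rw [Finset.mem_coe, Finset.mem_filter] at hpr
      obtain ⟨hW, hcard⟩ := hpr
      rw [Ws, Finset.mem_filter] at hW
      rw [hT, Finset.mem_coe, Finset.mem_sigma]
      exact ⟨Finset.mem_powersetCard_univ.2 hcard, Finset.mem_powerset.2 hW.2.2.1⟩
    · intro pr _ pr' _ h
      have h1 := congrArg Sigma.fst h
      have h2 := congrArg (fun x : Σ _ : Finset (Fin n), Finset (Sym2 (Fin n)) => x.2) h
      simp only at h1 h2
      exact Prod.ext h1 h2
  refine hinj.trans ?_
  rw [hT, Finset.card_sigma]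
  calc ∑ V ∈ Finset.powersetCard v (Finset.univ : Finset (Fin n)), V.sym2.powerset.card
      ≤ ∑ _V ∈ Finset.powersetCard v (Finset.univ : Finset (Fin n)),
          2 ^ ((M+1).choose 2) := by
        refine Finset.sum_le_sum fun V hV => ?_
        rw [Finset.card_powerset, Finset.card_sym2]
        have hVc : V.card = v := Finset.mem_powersetCard_univ.1 hV
        refine Nat.pow_le_pow_right (by norm_num) ?_
        rw [hVc]
        exact Nat.choose_le_choose 2 (by omega)
    _ = n.choose v * 2 ^ ((M+1).choose 2) := by
        rw [Finset.sum_const, Finset.card_powersetCard, Finset.card_univ, Fintype.card_fin,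
          smul_eq_mul]

lemma Ws_sum_bound (n M : ℕ) {t p : ℝ} (ht0 : 0 < t) (hp0 : 0 ≤ p) (hp1 : p ≤ 1) :
    ∑ pr ∈ Ws n M t, p ^ pr.2.card ≤
      ∑ v ∈ Finset.range (M+1),
        (n:ℝ)^v * 2^((M+1).choose 2) * p ^ (Nat.floor (t*v) + 1) := by
  classical
  have hmaps : ∀ pr ∈ Ws n M t, pr.1.card ∈ Finset.range (M+1) := by
    intro pr hpr
    rw [Ws, Finset.mem_filter] at hpr
    rw [Finset.mem_range]
    omega
  rw [← Finset.sum_fiberwise_of_maps_to hmaps (fun pr => p ^ pr.2.card)]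
  refine Finset.sum_le_sum fun v hv => ?_
  have hvM : v ≤ M := by rw [Finset.mem_range] at hv; omega
  have step1 : ∑ pr ∈ (Ws n M t).filter (fun pr => pr.1.card = v), p ^ pr.2.card
      ≤ ∑ _pr ∈ (Ws n M t).filter (fun pr => pr.1.card = v),
          p ^ (Nat.floor (t*v) + 1) := by
    refine Finset.sum_le_sum fun pr hpr => ?_
    rw [Finset.mem_filter] at hpr
    obtain ⟨hW, hcard⟩ := hpr
    rw [Ws, Finset.mem_filter] at hW
    refine pow_le_pow_of_le_one hp0 hp1 ?_
    have := hW.2.2.2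
    rw [hcard] at this
    have hfl : Nat.floor (t * v) < pr.2.card := by
      rw [Nat.floor_lt (by positivity)]
      exact_mod_cast this
    omega
  refine step1.trans ?_
  rw [Finset.sum_const, nsmul_eq_mul]
  have hcc : (((Ws n M t).filter fun pr => pr.1.card = v).card : ℝ)
      ≤ (n:ℝ)^v * 2^((M+1).choose 2) := by
    have h1 := class_card_le n M t v hvM
    have h2 : (n.choose v : ℝ) ≤ (n:ℝ)^v := by exact_mod_cast Nat.choose_le_pow n v
    have h1' : (((Ws n M t).filter fun pr => pr.1.card = v).card : ℝ)
        ≤ (n.choose v : ℝ) * 2^((M+1).choose 2) := by exact_mod_cast h1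
    have h3 : (0:ℝ) ≤ 2^((M+1).choose 2) := by positivity
    nlinarith
  have hpnn : (0:ℝ) ≤ p ^ (Nat.floor (t*v) + 1) := pow_nonneg hp0 _
  exact mul_le_mul_of_nonneg_right hcc hpnn

end OG4

namespace OG5
open OG OG2 OG3 OG4

lemma term_tendsto {t : ℝ} (ht0 : 0 < t) (C : ℝ) (hC : 0 ≤ C) (v : ℕ) (p : ℕ → ℝ)
    (hp0 : ∀ n, 0 ≤ p n) (hple : ∀ n : ℕ, p n ≤ (n : ℝ) ^ (-(1 / t))) :
    Tendsto (fun n : ℕ => (n:ℝ)^v * C * (p n) ^ (Nat.floor (t*v) + 1)) atTop (nhds 0) := by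
  set e : ℕ := Nat.floor (t * v) + 1 with he
  set c : ℝ := (v:ℝ) - (e:ℝ)/t with hc
  have hcneg : c < 0 := by
    have h1 : t * v < (e:ℝ) := by
      have := Nat.lt_floor_add_one (t * (v:ℝ))
      rw [he]; push_cast
      linarith
    have h2 : (v:ℝ) < (e:ℝ)/t := by
      rw [lt_div_iff₀ ht0]
      linarith [h1]
    rw [hc]; linarith
  have hbound : ∀ n : ℕ, 1 ≤ n →
      (n:ℝ)^v * C * (p n) ^ e ≤ C * (n:ℝ) ^ c := by
    intro n hn
    have hn0 : (0:ℝ) < (n:ℝ) := by exact_mod_cast hn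
    have hpe : (p n) ^ e ≤ ((n:ℝ) ^ (-(1/t))) ^ e :=
      pow_le_pow_left₀ (hp0 n) (hple n) e
    have hr1 : ((n:ℝ) ^ (-(1/t))) ^ e = (n:ℝ) ^ ((-(1/t)) * e) := by
      rw [← Real.rpow_natCast ((n:ℝ) ^ (-(1/t))) e, ← Real.rpow_mul (le_of_lt hn0)]
    have hr2 : (n:ℝ)^v = (n:ℝ) ^ ((v:ℕ):ℝ) := by
      rw [Real.rpow_natCast]
    have hr3 : (n:ℝ) ^ ((v:ℕ):ℝ) * (n:ℝ) ^ ((-(1/t)) * e) = (n:ℝ) ^ c := by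
      rw [← Real.rpow_add hn0]
      congr 1
      rw [hc]
      field_simp
      ring
    calc (n:ℝ)^v * C * (p n) ^ e
        ≤ (n:ℝ)^v * C * ((n:ℝ) ^ (-(1/t))) ^ e := by
          have h2 : (0:ℝ) ≤ (n:ℝ)^v * C := by positivity
          exact mul_le_mul_of_nonneg_left hpe h2
      _ = C * ((n:ℝ) ^ ((v:ℕ):ℝ) * (n:ℝ) ^ ((-(1/t)) * e)) := by
          rw [hr1, ← hr2]; ring
      _ = C * (n:ℝ) ^ c := by rw [hr3]
  have hlim : Tendsto (fun n : ℕ => C * (n:ℝ) ^ c) atTop (nhds 0) := by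
    have h1 : Tendsto (fun x : ℝ => x ^ c) atTop (nhds 0) := by
      have h0 : (0:ℝ) < -c := by linarith
      have := tendsto_rpow_neg_atTop h0
      simpa using this
    have h2 := (h1.comp (tendsto_natCast_atTop_atTop (R := ℝ))).const_mul C
    simpa using h2
  refine squeeze_zero' ?_ ?_ hlim
  · filter_upwards [Filter.eventually_ge_atTop 1] with n hn
    have := hp0 n
    positivity
  · filter_upwards [Filter.eventually_ge_atTop 1] with n hn
    exact hbound n hn

theorem stmt2aux {α : Type} [Fintype α] (G : SimpleGraph α) (k : ℕ) (ρ : Fin k ↪ α)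
    (hbal : BalancedRooted (Set.range ρ) (toSub G))
    (t : ℝ) (ht0 : 0 < t) (ht : t < mRooted (Set.range ρ) (toSub G)) :
    ∃ D : ℕ, ∀ p : ℕ → ℝ, (∀ n, 0 ≤ p n) → (∀ n : ℕ, p n ≤ (n : ℝ) ^ (-(1 / t))) →
      Tendsto (fun n => gnpProb n (p n) fun Γ => ∀ f : Fin k ↪ Fin n, spanCount G ρ Γ f ≤ D)
        atTop (nhds 1) := by
  obtain ⟨D, M, hdet⟩ := det_main hbal ht0 ht
  refine ⟨D, fun p hp0 hple => ?_⟩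
  have hp1 : ∀ n : ℕ, 1 ≤ n → p n ≤ 1 := by
    intro n hn
    refine (hple n).trans ?_
    apply Real.rpow_le_one_of_one_le_of_nonpos
    · exact_mod_cast hn
    · have h : 0 < 1/t := by positivity
      linarith
  have hsplit : ∀ n : ℕ,
      (gnpProb n (p n) fun Γ => ∀ f : Fin k ↪ Fin n, spanCount G ρ Γ f ≤ D)
      = 1 - gnpProb n (p n) (fun Γ => ¬ ∀ f : Fin k ↪ Fin n, spanCount G ρ Γ f ≤ D) := by
    intro n
    have := gnpProb_add_compl n (p n) (fun Γ => ∀ f : Fin k ↪ Fin n, spanCount G ρ Γ f ≤ D)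
    linarith
  set Bnd : ℕ → ℝ := fun n => ∑ v ∈ Finset.range (M+1),
    (n:ℝ)^v * 2^((M+1).choose 2) * (p n) ^ (Nat.floor (t*v) + 1) with hBnd
  have hbad : ∀ n : ℕ, 1 ≤ n →
      gnpProb n (p n) (fun Γ => ¬ ∀ f : Fin k ↪ Fin n, spanCount G ρ Γ f ≤ D) ≤ Bnd n := by
    intro n hn
    have h1 := hp1 n hn
    have himp : ∀ Γ : SimpleGraph (Fin n), (¬ ∀ f : Fin k ↪ Fin n, spanCount G ρ Γ f ≤ D) →
        ∃ pr ∈ Ws n M t, ↑pr.2 ⊆ Γ.edgeSet := by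
      intro Γ hΓ
      push_neg at hΓ
      obtain ⟨f, hf⟩ := hΓ
      obtain ⟨Vs, Es, hEsub, hEsym, hVM, hdens⟩ := hdet n Γ f hf
      refine ⟨(Vs, Es), ?_, hEsub⟩
      rw [Ws, Finset.mem_filter]
      exact ⟨Finset.mem_univ _, hVM, hEsym, hdens⟩
    calc gnpProb n (p n) (fun Γ => ¬ ∀ f : Fin k ↪ Fin n, spanCount G ρ Γ f ≤ D)
        ≤ gnpProb n (p n) (fun Γ => ∃ pr ∈ Ws n M t, ↑pr.2 ⊆ Γ.edgeSet) :=
          gnpProb_mono (hp0 n) h1 himp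
      _ ≤ ∑ pr ∈ Ws n M t, gnpProb n (p n) (fun Γ => ↑pr.2 ⊆ Γ.edgeSet) :=
          gnpProb_union (hp0 n) h1 _ _
      _ ≤ ∑ pr ∈ Ws n M t, (p n) ^ pr.2.card :=
          Finset.sum_le_sum fun pr _ => gnpProb_edges n (hp0 n) h1 pr.2
      _ ≤ Bnd n := Ws_sum_bound n M ht0 (hp0 n) h1
  have hBnd0 : Tendsto Bnd atTop (nhds 0) := by
    rw [hBnd]
    have h := tendsto_finset_sum (Finset.range (M+1))
      (fun v _ => term_tendsto ht0 (2^((M+1).choose 2) : ℝ) (by positivity) v p hp0 hple)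
    simpa using h
  have hbadto0 : Tendsto
      (fun n => gnpProb n (p n) (fun Γ => ¬ ∀ f : Fin k ↪ Fin n, spanCount G ρ Γ f ≤ D))
      atTop (nhds 0) := by
    refine squeeze_zero' ?_ ?_ hBnd0
    · filter_upwards [Filter.eventually_ge_atTop 1] with n hn
      exact gnpProb_nonneg (hp0 n) (hp1 n hn) _
    · filter_upwards [Filter.eventually_ge_atTop 1] with n hn
      exact hbad n hn
  have hfinal : Tendsto (fun n : ℕ =>
      1 - gnpProb n (p n) (fun Γ => ¬ ∀ f : Fin k ↪ Fin n, spanCount G ρ Γ f ≤ D))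
      atTop (nhds 1) := by
    have := (tendsto_const_nhds (x := (1:ℝ)) (f := atTop (α := ℕ))).sub hbadto0
    simpa using this
  exact hfinal.congr fun n => (hsplit n).symm

end OG5

namespace OG

theorem stmt2 {α : Type} [Fintype α] (G : SimpleGraph α) (k : ℕ) (ρ : Fin k ↪ α)
    (hbal : BalancedRooted (Set.range ρ) (toSub G))
    (t : ℝ) (ht0 : 0 < t) (ht : t < mRooted (Set.range ρ) (toSub G)) :
    ∃ D : ℕ, ∀ p : ℕ → ℝ, (∀ n, 0 ≤ p n) → (∀ n : ℕ, p n ≤ (n : ℝ) ^ (-(1 / t))) →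
      Tendsto (fun n => gnpProb n (p n) fun Γ => ∀ f : Fin k ↪ Fin n, spanCount G ρ Γ f ≤ D)
        atTop (nhds 1) :=
  OG5.stmt2aux G k ρ hbal t ht0 ht

end OG
end
end

section
/- Let F be a 2-balanced graph that is not a tree with a distinguished edge e such that m₂(F − e) ≤ m̄²₂(F), and let 1 ≤ k ≤ r. Then every F* ∈ 𝓕ᵏ satisfies (v_{F*} − 2) − e_{F*}/m̄ʳ₂(F) ≥ −1/m̄^{r−k+1}₂(F); equivalently, n^{v_{F*}−2} n^{−e_{F*}/m̄ʳ₂(F)} ≥ n^{−1/m̄^{r−k+1}₂(F)} for all n ≥ 1. -/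
open Filter Asymptotics
open scoped Classical ENNReal

noncomputable section

namespace OG

variable {W U X : Type*}

variable {ι : Type*} [Fintype ι]

/-! ### Auxiliary lemmas for stmt6 -/

section AuxStmt6

open SimpleGraph

lemma aux_edgeSet_finite {W : Type*} {G : Sub W} (h : G.verts.Finite) : G.edgeSet.Finite := by
  apply ((h.prod h).image (fun p : W × W => Sym2.mk p.1 p.2)).subset
  intro e he
  induction e using Sym2.ind with
  | _ x y =>
    have hadj : G.Adj x y := he
    exact ⟨(x, y), ⟨G.edge_vert hadj, G.edge_vert hadj.symm⟩, rfl⟩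

lemma aux_finite_subs {F : Sub ℕ} (hfin : F.verts.Finite) : Finite {H : Sub ℕ // H ≤ F} := by
  have h1 : {s : Set ℕ | s ⊆ F.verts}.Finite := Set.Finite.finite_subsets hfin
  have h2 : {t : Set (ℕ × ℕ) | t ⊆ F.verts ×ˢ F.verts}.Finite :=
    Set.Finite.finite_subsets (hfin.prod hfin)
  haveI := h1.to_subtype
  haveI := h2.to_subtype
  refine Finite.of_injective (fun H : {H : Sub ℕ // H ≤ F} =>
    ((⟨H.1.verts, H.2.1⟩ : {s : Set ℕ | s ⊆ F.verts}),
     (⟨{p : ℕ × ℕ | H.1.Adj p.1 p.2},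
        fun p hp => ⟨F.edge_vert (H.2.2 hp), F.edge_vert (F.adj_symm (H.2.2 hp))⟩⟩ :
        {t : Set (ℕ × ℕ) | t ⊆ F.verts ×ˢ F.verts}))) ?_
  intro H H' hHH'
  have h1 : H.1.verts = H'.1.verts := congrArg (fun x => (x.1 : Set ℕ)) hHH'
  have h2 : {p : ℕ × ℕ | H.1.Adj p.1 p.2} = {p : ℕ × ℕ | H'.1.Adj p.1 p.2} :=
    congrArg (fun x => (x.2 : Set (ℕ × ℕ))) hHH'
  apply Subtype.ext
  ext x y
  · rw [h1]
  · exact ⟨fun h => Set.ext_iff.mp h2 (x, y) |>.mp h, fun h => Set.ext_iff.mp h2 (x, y) |>.mpr h⟩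

lemma aux_bddAbove {F : Sub ℕ} (hfin : F.verts.Finite) (f : {H : Sub ℕ // H ≤ F} → ℝ) :
    BddAbove (Set.range f) :=
  haveI := aux_finite_subs hfin
  (Set.finite_range f).bddAbove

lemma mbar_succ_def (F : Sub ℕ) {s : ℕ} (hs : 1 ≤ s) :
    mbar F (s + 1) = ⨆ H : {H : Sub ℕ // H ≤ F},
      (nedges H.1 : ℝ) / ((nverts H.1 : ℝ) - 2 + 1 / mbar F s) := by
  obtain ⟨t, rfl⟩ : ∃ t, s = t + 1 := ⟨s - 1, by omega⟩
  rfl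

end AuxStmt6

section AuxStmt6b

open SimpleGraph

variable {F : Sub ℕ} {u v : ℕ}

lemma aux_ne_of_adj (huv : F.Adj u v) : u ≠ v := by
  have := F.adj_sub huv
  simpa using this.ne

lemma aux_uv_mem (huv : F.Adj u v) : u ∈ F.verts ∧ v ∈ F.verts :=
  ⟨F.edge_vert huv, F.edge_vert (F.adj_symm huv)⟩

lemma aux_edge_sub (huv : F.Adj u v) :
    ∃ He : Sub ℕ, He ≤ F ∧ nverts He = 2 ∧ nedges He = 1 := by
  refine ⟨(⊤ : SimpleGraph ℕ).subgraphOfAdj (F.adj_sub huv),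
    SimpleGraph.subgraphOfAdj_le_of_adj F huv, ?_, ?_⟩
  · show ({u, v} : Set ℕ).ncard = 2
    exact Set.ncard_pair (aux_ne_of_adj huv)
  · show ((⊤ : SimpleGraph ℕ).subgraphOfAdj (F.adj_sub huv)).edgeSet.ncard = 1
    rw [SimpleGraph.edgeSet_subgraphOfAdj]
    exact Set.ncard_singleton _

lemma aux_one_le_nedges (hfin : F.verts.Finite) (huv : F.Adj u v) : 1 ≤ nedges F := by
  have hmem : s(u, v) ∈ F.edgeSet := huv
  have : ({s(u, v)} : Set (Sym2 ℕ)).ncard ≤ F.edgeSet.ncard :=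
    Set.ncard_le_ncard (by simpa using hmem) (aux_edgeSet_finite hfin)
  simpa [nedges] using this

lemma aux_two_le_nverts (hfin : F.verts.Finite) (huv : F.Adj u v) : 2 ≤ nverts F := by
  have hsub : ({u, v} : Set ℕ) ⊆ F.verts := by
    intro x hx
    rcases hx with rfl | hx
    · exact F.edge_vert huv
    · rcases hx with rfl
      exact F.edge_vert (F.adj_symm huv)
  have := Set.ncard_le_ncard hsub hfin
  rwa [Set.ncard_pair (aux_ne_of_adj huv)] at this

lemma mbar_one_pos (hfin : F.verts.Finite) (huv : F.Adj u v) : 0 < mbar F 1 := by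
  obtain ⟨He, hle, hv, he⟩ := aux_edge_sub huv
  have hdd : dd He = 1 / 2 := by
    rw [dd, hv, he]; norm_num
  have : dd He ≤ mbar F 1 := by
    show dd He ≤ mD F
    exact le_ciSup (f := fun H : {H : Sub ℕ // H ≤ F} => dd H.1)
      (aux_bddAbove hfin _) (⟨He, hle⟩ : {H : Sub ℕ // H ≤ F})
  rw [hdd] at this
  linarith

lemma mbar_pos_le (hfin : F.verts.Finite) (huv : F.Adj u v) :
    ∀ s, 1 ≤ s → 0 < mbar F s ∧ mbar F s ≤ mbar F (s + 1) := by
  obtain ⟨He, hle, hv, he⟩ := aux_edge_sub huv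
  have key : ∀ s, 1 ≤ s → 0 < mbar F s → mbar F s ≤ mbar F (s + 1) := by
    intro s hs hpos
    rw [mbar_succ_def F hs]
    have : (nedges He : ℝ) / ((nverts He : ℝ) - 2 + 1 / mbar F s) = mbar F s := by
      rw [hv, he]
      push_cast
      rw [show (2 : ℝ) - 2 + 1 / mbar F s = 1 / mbar F s by ring, one_div_one_div]
    calc mbar F s = (nedges He : ℝ) / ((nverts He : ℝ) - 2 + 1 / mbar F s) := this.symm
      _ ≤ _ := le_ciSup (f := fun H : {H : Sub ℕ // H ≤ F} =>
          (nedges H.1 : ℝ) / ((nverts H.1 : ℝ) - 2 + 1 / mbar F s))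
          (aux_bddAbove hfin _) (⟨He, hle⟩ : {H : Sub ℕ // H ≤ F})
  intro s hs
  induction s, hs using Nat.le_induction with
  | base => exact ⟨mbar_one_pos hfin huv, key 1 le_rfl (mbar_one_pos hfin huv)⟩
  | succ n hn ih =>
    have hpos : 0 < mbar F (n + 1) := lt_of_lt_of_le ih.1 ih.2
    exact ⟨hpos, key (n + 1) (by omega) hpos⟩

lemma mbar_pos (hfin : F.verts.Finite) (huv : F.Adj u v) {s : ℕ} (hs : 1 ≤ s) :
    0 < mbar F s := (mbar_pos_le hfin huv s hs).1

lemma mbar_mono (hfin : F.verts.Finite) (huv : F.Adj u v) {s t : ℕ} (hs : 1 ≤ s)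
    (hst : s ≤ t) : mbar F s ≤ mbar F t := by
  induction t, hst using Nat.le_induction with
  | base => exact le_refl _
  | succ n hn ih => exact le_trans ih (mbar_pos_le hfin huv n (le_trans hs hn)).2

lemma mbar_key (hfin : F.verts.Finite) (huv : F.Adj u v) {s : ℕ} (hs : 1 ≤ s) :
    (nedges F : ℝ) / mbar F (s + 1) ≤ (nverts F : ℝ) - 2 + 1 / mbar F s := by
  have hMs := mbar_pos hfin huv hs
  have hMs1 := mbar_pos hfin huv (show 1 ≤ s + 1 by omega)
  have hD : 0 < (nverts F : ℝ) - 2 + 1 / mbar F s := by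
    have h2 : (2 : ℝ) ≤ (nverts F : ℝ) := by exact_mod_cast aux_two_le_nverts hfin huv
    have : 0 < 1 / mbar F s := by positivity
    linarith
  have hle : (nedges F : ℝ) / ((nverts F : ℝ) - 2 + 1 / mbar F s) ≤ mbar F (s + 1) := by
    rw [mbar_succ_def F hs]
    exact le_ciSup (f := fun H : {H : Sub ℕ // H ≤ F} =>
        (nedges H.1 : ℝ) / ((nverts H.1 : ℝ) - 2 + 1 / mbar F s))
        (aux_bddAbove hfin _) (⟨F, le_refl F⟩ : {H : Sub ℕ // H ≤ F})
  rw [div_le_iff₀ hD] at hle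
  rw [div_le_iff₀ hMs1]
  linarith [hle]

end AuxStmt6b

section AuxStmt6c

lemma aux_ncard_biUnion_le {ι α : Type*} (s : Finset ι) (A : ι → Set α) :
    (⋃ i ∈ s, A i).ncard ≤ ∑ i ∈ s, (A i).ncard := by
  classical
  induction s using Finset.induction with
  | empty => simp
  | insert a s' h ih =>
    rw [Finset.sum_insert h, show (⋃ i ∈ insert a s', A i) = A a ∪ ⋃ i ∈ s', A i by ext x; simp]
    calc (A a ∪ ⋃ i ∈ s', A i).ncard ≤ (A a).ncard + (⋃ i ∈ s', A i).ncard :=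
          Set.ncard_union_le _ _
      _ ≤ (A a).ncard + ∑ i ∈ s', (A i).ncard := by omega

lemma aux_ncard_biUnion_eq {ι α : Type*} (s : Finset ι) (A : ι → Set α)
    (hA : ∀ i ∈ s, (A i).Finite)
    (hd : ∀ i ∈ s, ∀ j ∈ s, i ≠ j → Disjoint (A i) (A j)) :
    (⋃ i ∈ s, A i).ncard = ∑ i ∈ s, (A i).ncard := by
  classical
  induction s using Finset.induction with
  | empty => simp
  | insert a s' h ih =>
    rw [Finset.sum_insert h]
    have hun : (⋃ i ∈ insert a s', A i) = A a ∪ ⋃ i ∈ s', A i := by ext x; simp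
    rw [hun]
    have hdisj : Disjoint (A a) (⋃ i ∈ s', A i) := by
      rw [Set.disjoint_iUnion₂_right]
      intro i hi
      exact hd a (Finset.mem_insert_self a s') i (Finset.mem_insert_of_mem hi)
        (fun he => h (he ▸ hi))
    rw [Set.ncard_union_eq hdisj (hA a (Finset.mem_insert_self a s'))
      (Set.Finite.biUnion (s'.finite_toSet) (fun i hi => hA i (Finset.mem_insert_of_mem hi)))]
    rw [ih (fun i hi => hA i (Finset.mem_insert_of_mem hi))
      (fun i hi j hj hij => hd i (Finset.mem_insert_of_mem hi) j (Finset.mem_insert_of_mem hj) hij)]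

lemma aux_pair_cases {x y a b : ℕ} (hxy : x ≠ y) (h : ({x, y} : Set ℕ) = {a, b}) :
    (x = a ∧ y = b) ∨ (x = b ∧ y = a) := by
  have hx : x ∈ ({a, b} : Set ℕ) := h ▸ (Set.mem_insert x {y})
  have hy : y ∈ ({a, b} : Set ℕ) := h ▸ (by simp : y ∈ ({x, y} : Set ℕ))
  rcases hx with rfl | hx
  · rcases hy with rfl | hy
    · exact absurd rfl hxy
    · rcases hy with rfl; exact Or.inl ⟨rfl, rfl⟩
  · rcases hx with rfl
    rcases hy with rfl | hy
    · exact Or.inr ⟨rfl, rfl⟩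
    · rcases hy with rfl; exact absurd rfl hxy

end AuxStmt6c

section AuxStmt6d

open SimpleGraph

lemma aux_NRe_eq {F : Sub ℕ} {u v : ℕ} (huv : F.Adj u v) :
    {e | NRe F {u, v} e} = F.edgeSet \ {s(u, v)} := by
  ext e
  induction e using Sym2.ind with
  | _ x y =>
    constructor
    · rintro ⟨he, hnr⟩
      refine ⟨he, fun hmem => hnr ?_⟩
      rw [Set.mem_singleton_iff] at hmem
      intro z hz
      rw [hmem] at hz
      rcases Sym2.mem_iff.mp hz with rfl | rfl
      · exact Set.mem_insert _ _
      · exact Set.mem_insert_of_mem _ rfl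
    · rintro ⟨he, hne⟩
      refine ⟨he, fun hall => hne ?_⟩
      have hadj : F.Adj x y := he
      have hxy : x ≠ y := aux_ne_of_adj hadj
      have hx : x ∈ ({u, v} : Set ℕ) := hall x (by simp)
      have hy : y ∈ ({u, v} : Set ℕ) := hall y (by simp)
      rw [Set.mem_singleton_iff]
      rcases hx with rfl | hx
      · rcases hy with rfl | hy
        · exact absurd rfl hxy
        · rcases hy with rfl; rfl
      · rcases hx with rfl
        rcases hy with rfl | hy
        · exact Sym2.eq_swap
        · rcases hy with rfl; exact absurd rfl hxy

lemma prod_counts {F : Sub ℕ} (hFfin : F.verts.Finite) {u v : ℕ} (huv : F.Adj u v)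
    {H : Sub ℕ} (hHfin : H.verts.Finite) {c d : ℕ} (hcd : c ≠ d)
    (hc : c ∈ H.verts) (hd : d ∈ H.verts)
    {P : Sub ℕ} {φ : ℕ → ℕ} (hP : IsProdCopy F {u, v} H c d P φ) :
    P.verts.Finite ∧ φ u ∈ P.verts ∧ φ v ∈ P.verts ∧ P.Adj (φ u) (φ v) ∧ φ u ≠ φ v ∧
    ((nverts F : ℝ) + ((nedges F : ℝ) - 1) * ((nverts H : ℝ) - 2) ≤ (nverts P : ℝ)) ∧
    ((nedges P : ℝ) ≤ 1 + ((nedges F : ℝ) - 1) * (nedges H : ℝ)) := by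
  obtain ⟨ψ, hinj, hψinj, hroots, hpdisj, hφdisj, hverts, hadj⟩ := hP
  have hu : u ∈ F.verts := F.edge_vert huv
  have hv : v ∈ F.verts := F.edge_vert (F.adj_symm huv)
  set S : Set (Sym2 ℕ) := {e | NRe F {u, v} e} with hSdef
  have hSeq : S = F.edgeSet \ {s(u, v)} := aux_NRe_eq huv
  have hEfin : F.edgeSet.Finite := aux_edgeSet_finite hFfin
  have hSfin : S.Finite := hSeq ▸ (hEfin.diff)
  have huvE : s(u, v) ∈ F.edgeSet := huv
  have hS1 : S.ncard + 1 = nedges F := by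
    rw [hSeq]
    have := Set.ncard_diff_add_ncard_of_subset (Set.singleton_subset_iff.mpr huvE) hEfin
    rw [Set.ncard_singleton] at this
    exact this
  have hScast : (S.ncard : ℝ) = (nedges F : ℝ) - 1 := by
    have h := congrArg (fun n : ℕ => (n : ℝ)) hS1
    push_cast at h
    linarith
  have hcdsub : ({c, d} : Set ℕ) ⊆ H.verts := by
    intro x hx
    rcases hx with rfl | hx
    · exact hc
    · rcases hx with rfl; exact hd
  have hw : (H.verts \ ({c, d} : Set ℕ)).ncard + 2 = nverts H := by
    have := Set.ncard_diff_add_ncard_of_subset hcdsub hHfin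
    rwa [Set.ncard_pair hcd] at this
  have hwcast : ((H.verts \ ({c, d} : Set ℕ)).ncard : ℝ) = (nverts H : ℝ) - 2 := by
    have h := congrArg (fun n : ℕ => (n : ℝ)) hw
    push_cast at h
    linarith
  set S' := hSfin.toFinset with hS'def
  have hmemS' : ∀ e, e ∈ S' ↔ e ∈ S := fun e => hSfin.mem_toFinset
  have hcardS' : S'.card = S.ncard := (Set.ncard_eq_toFinset_card S hSfin).symm
  have hPfin : P.verts.Finite := by
    rw [hverts]
    exact (hFfin.image φ).union (hSfin.biUnion (fun e _ => hHfin.image _))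
  have hφu : φ u ∈ P.verts := by
    rw [hverts]; exact Set.mem_union_left _ ⟨u, hu, rfl⟩
  have hφv : φ v ∈ P.verts := by
    rw [hverts]; exact Set.mem_union_left _ ⟨v, hv, rfl⟩
  have hPadj : P.Adj (φ u) (φ v) :=
    (hadj _ _).mpr (Or.inl ⟨u, v, huv, Set.mem_insert _ _, Set.mem_insert_of_mem _ rfl,
      rfl, rfl⟩)
  have hφne : φ u ≠ φ v := fun h => (aux_ne_of_adj huv) (hinj hu hv h)
  refine ⟨hPfin, hφu, hφv, hPadj, hφne, ?_, ?_⟩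
  · -- vertex lower bound
    have hsub : (φ '' F.verts) ∪ ⋃ e ∈ S', ψ e '' (H.verts \ {c, d}) ⊆ P.verts := by
      rw [hverts]
      apply Set.union_subset_union subset_rfl
      intro x hx
      simp only [Set.mem_iUnion] at hx ⊢
      obtain ⟨e, he, hx⟩ := hx
      exact ⟨e, (hmemS' e).mp he, (Set.image_mono Set.diff_subset) hx⟩
    have hAfin : ∀ e ∈ S', (ψ e '' (H.verts \ ({c, d} : Set ℕ))).Finite :=
      fun e _ => (hHfin.diff).image _
    have hdisj1 : Disjoint (φ '' F.verts) (⋃ e ∈ S', ψ e '' (H.verts \ {c, d})) := by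
      rw [Set.disjoint_iUnion₂_right]
      intro e he
      exact (hφdisj e ((hmemS' e).mp he)).symm
    have hAcard : ∀ e ∈ S', (ψ e '' (H.verts \ ({c, d} : Set ℕ))).ncard
        = (H.verts \ ({c, d} : Set ℕ)).ncard := by
      intro e he
      exact Set.ncard_image_of_injOn ((hψinj e ((hmemS' e).mp he)).mono Set.diff_subset)
    have h1 : ((φ '' F.verts) ∪ ⋃ e ∈ S', ψ e '' (H.verts \ {c, d})).ncard
        = nverts F + S.ncard * (H.verts \ ({c, d} : Set ℕ)).ncard := by
      rw [Set.ncard_union_eq hdisj1 (hFfin.image φ)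
        (Set.Finite.biUnion (S'.finite_toSet) (fun e he => hAfin e he))]
      rw [Set.ncard_image_of_injOn hinj]
      congr 1
      rw [aux_ncard_biUnion_eq S' _ hAfin
        (fun e he e' he' hne => hpdisj e e' ((hmemS' e).mp he) ((hmemS' e').mp he') hne)]
      rw [Finset.sum_congr rfl hAcard, Finset.sum_const, smul_eq_mul, hcardS']
    have hcount : nverts F + S.ncard * (H.verts \ ({c, d} : Set ℕ)).ncard ≤ nverts P := by
      rw [← h1]
      exact Set.ncard_le_ncard hsub hPfin
    have := (Nat.cast_le (α := ℝ)).mpr hcount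
    push_cast at this
    rw [hScast, hwcast] at this
    exact this
  · -- edge upper bound
    have hHE : H.edgeSet.Finite := aux_edgeSet_finite hHfin
    have hEsub : P.edgeSet ⊆ {s(φ u, φ v)} ∪ ⋃ e ∈ S', Sym2.map (ψ e) '' H.edgeSet := by
      intro e' he'
      induction e' using Sym2.ind with
      | _ x y =>
        have hxy : P.Adj x y := he'
        rcases (hadj x y).mp hxy with ⟨p, q, hpq, hpR, hqR, hx, hy⟩ | ⟨e, hNRe, p, q, hpq, hx, hy⟩
        · subst hx; subst hy
          apply Set.mem_union_left
          have hpqne : p ≠ q := aux_ne_of_adj hpq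
          rcases hpR with rfl | hpR
          · rcases hqR with rfl | hqR
            · exact absurd rfl hpqne
            · rcases hqR with rfl; rfl
          · rcases hpR with rfl
            rcases hqR with rfl | hqR
            · exact Sym2.eq_swap
            · rcases hqR with rfl; exact absurd rfl hpqne
        · subst hx; subst hy
          apply Set.mem_union_right
          simp only [Set.mem_iUnion]
          refine ⟨e, (hmemS' e).mpr hNRe, s(p, q), hpq, ?_⟩
          exact Sym2.map_pair_eq (ψ e) p q
    have hfinR : (({s(φ u, φ v)} : Set (Sym2 ℕ))
        ∪ ⋃ e ∈ S', Sym2.map (ψ e) '' H.edgeSet).Finite :=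
      (Set.finite_singleton _).union
        (Set.Finite.biUnion S'.finite_toSet (fun e _ => hHE.image _))
    have hEcount : nedges P ≤ 1 + S.ncard * nedges H := by
      calc nedges P ≤ (({s(φ u, φ v)} : Set (Sym2 ℕ))
            ∪ ⋃ e ∈ S', Sym2.map (ψ e) '' H.edgeSet).ncard :=
            Set.ncard_le_ncard hEsub hfinR
        _ ≤ ({s(φ u, φ v)} : Set (Sym2 ℕ)).ncard
            + (⋃ e ∈ S', Sym2.map (ψ e) '' H.edgeSet).ncard := Set.ncard_union_le _ _
        _ ≤ 1 + ∑ e ∈ S', (Sym2.map (ψ e) '' H.edgeSet).ncard := by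
            rw [Set.ncard_singleton]
            exact add_le_add_right (aux_ncard_biUnion_le _ _) 1
        _ ≤ 1 + ∑ e ∈ S', nedges H :=
            add_le_add_right (Finset.sum_le_sum (fun e _ => Set.ncard_image_le hHE)) 1
        _ = 1 + S.ncard * nedges H := by
            rw [Finset.sum_const, smul_eq_mul, hcardS']
    have := (Nat.cast_le (α := ℝ)).mpr hEcount
    push_cast at this
    rw [hScast] at this
    exact this

end AuxStmt6d

section AuxStmt6e

open SimpleGraph

lemma aux_telescope (f : ℕ → ℝ) : ∀ k, 1 ≤ k →
    ∑ i ∈ Finset.Ico 1 k, (f i - f (i + 1)) = f 1 - f k := by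
  intro k hk
  induction k, hk using Nat.le_induction with
  | base => simp
  | succ n hn ih =>
    rw [Finset.sum_Ico_succ_top hn, ih]
    ring

lemma aux_main {F : Sub ℕ} (hfin : F.verts.Finite) {u v : ℕ} (huv : F.Adj u v)
    {k : ℕ} {Fs : Sub ℕ} {a b : ℕ} (h : InF F u v k Fs a b) :
    a ≠ b ∧ Fs.verts.Finite ∧ a ∈ Fs.verts ∧ b ∈ Fs.verts ∧ Fs.Adj a b ∧
    ∀ r, k ≤ r →
      -(1 / mbar F (r - k + 1)) ≤ ((nverts Fs : ℝ) - 2) - (nedges Fs : ℝ) / mbar F r := by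
  induction h with
  | base a b G hab hv he =>
    refine ⟨hab, by rw [hv]; exact (Set.finite_singleton _).insert _,
      by rw [hv]; exact Set.mem_insert _ _,
      by rw [hv]; exact Set.mem_insert_of_mem _ rfl, ?_, ?_⟩
    · show s(a, b) ∈ G.edgeSet
      rw [he]; rfl
    · intro r hr
      have hnv : nverts G = 2 := by rw [nverts, hv]; exact Set.ncard_pair hab
      have hne : nedges G = 1 := by rw [nedges, he]; exact Set.ncard_singleton _
      rw [hnv, hne, Nat.sub_add_cancel hr]
      push_cast
      linarith
  | step k a b P G j Fi c d φ hk hj hrec hprod hdisj hG ih =>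
    classical
    set s : Finset ℕ := Finset.Ico 1 k with hsdef
    -- per-index facts
    have hI : ∀ i ∈ s, a ≠ b ∧ (P i).verts.Finite ∧ a ∈ (P i).verts ∧ b ∈ (P i).verts ∧
        (P i).Adj a b ∧
        ((nverts F : ℝ) + ((nedges F : ℝ) - 1) * ((nverts (Fi i) : ℝ) - 2)
          ≤ (nverts (P i) : ℝ)) ∧
        ((nedges (P i) : ℝ) ≤ 1 + ((nedges F : ℝ) - 1) * (nedges (Fi i) : ℝ)) ∧
        ∀ r, j i ≤ r → -(1 / mbar F (r - j i + 1))
          ≤ ((nverts (Fi i) : ℝ) - 2) - (nedges (Fi i) : ℝ) / mbar F r := by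
      intro i hi
      rw [hsdef, Finset.mem_Ico] at hi
      obtain ⟨hcdne, hFifin, hci, hdi, _, hineq⟩ := ih i hi.1 hi.2
      obtain ⟨hpc, hroots⟩ := hprod i hi.1 hi.2
      obtain ⟨hPfin, hφu, hφv, hPadj, hφne, hvlow, hehigh⟩ :=
        prod_counts hfin huv hFifin hcdne hci hdi hpc
      rcases aux_pair_cases hφne hroots with ⟨hua, hvb⟩ | ⟨hub, hva⟩
      · exact ⟨by rw [← hua, ← hvb]; exact hφne, hPfin, hua ▸ hφu, hvb ▸ hφv,
          hua ▸ hvb ▸ hPadj, hvlow, hehigh, hineq⟩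
      · refine ⟨by rw [← hva, ← hub]; exact hφne.symm, hPfin, hva ▸ hφv,
          hub ▸ hφu, ?_, hvlow, hehigh, hineq⟩
        · have := (P i).adj_symm hPadj
          rw [hub, hva] at this
          exact this
    have h1s : 1 ∈ s := by rw [hsdef, Finset.mem_Ico]; omega
    obtain ⟨hab, hP1fin, haP1, hbP1, hadjP1, _, _, _⟩ := hI 1 h1s
    -- structure of G
    have hGverts : G.verts = ⋃ i ∈ Set.Ico 1 k, (P i).verts := by
      rw [hG]; simp only [SimpleGraph.Subgraph.verts_iSup]
    have hGadj : ∀ x y, G.Adj x y ↔ ∃ i, i ∈ Set.Ico 1 k ∧ (P i).Adj x y := by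
      intro x y
      rw [hG]
      simp only [SimpleGraph.Subgraph.iSup_adj, exists_prop]
    have hGedge : G.edgeSet = ⋃ i ∈ Set.Ico 1 k, (P i).edgeSet := by
      ext e
      induction e using Sym2.ind with
      | _ x y =>
        simp only [SimpleGraph.Subgraph.mem_edgeSet, Set.mem_iUnion, exists_prop]
        exact hGadj x y
    have hmems : ∀ i : ℕ, i ∈ Set.Ico 1 k ↔ i ∈ s := by
      intro i; rw [hsdef, Finset.mem_Ico, Set.mem_Ico]
    -- vertex sets
    have hVsets : G.verts = ({a, b} : Set ℕ) ∪ ⋃ i ∈ s, ((P i).verts \ {a, b}) := by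
      rw [hGverts]
      ext x
      simp only [Set.mem_iUnion, Set.mem_union, Set.mem_diff, exists_prop]
      constructor
      · rintro ⟨i, hi, hx⟩
        by_cases hx2 : x ∈ ({a, b} : Set ℕ)
        · exact Or.inl hx2
        · exact Or.inr ⟨i, (hmems i).mp hi, hx, hx2⟩
      · rintro (hx | ⟨i, hi, hx, _⟩)
        · rcases hx with rfl | hx
          · exact ⟨1, (hmems 1).mpr h1s, haP1⟩
          · rcases hx with rfl
            exact ⟨1, (hmems 1).mpr h1s, hbP1⟩
        · exact ⟨i, (hmems i).mpr hi, hx⟩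
    have hPifin : ∀ i ∈ s, (P i).verts.Finite := fun i hi => (hI i hi).2.1
    have habPi : ∀ i ∈ s, ({a, b} : Set ℕ) ⊆ (P i).verts := by
      intro i hi x hx
      rcases hx with rfl | hx
      · exact (hI i hi).2.2.1
      · rcases hx with rfl; exact (hI i hi).2.2.2.1
    have hGfin : G.verts.Finite := by
      rw [hVsets]
      exact ((Set.finite_singleton b).insert a).union
        (Set.Finite.biUnion s.finite_toSet (fun i hi => ((hPifin i hi).diff)))
    have hdiffc : ∀ i ∈ s, ((P i).verts \ ({a, b} : Set ℕ)).ncard + 2 = nverts (P i) := by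
      intro i hi
      have := Set.ncard_diff_add_ncard_of_subset (habPi i hi) (hPifin i hi)
      rwa [Set.ncard_pair hab] at this
    have hfinU : (⋃ i ∈ s, ((P i).verts \ ({a, b} : Set ℕ))).Finite :=
      Set.Finite.biUnion s.finite_toSet (fun i hi => ((hPifin i hi).diff))
    have hdU : Disjoint ({a, b} : Set ℕ) (⋃ i ∈ s, ((P i).verts \ ({a, b} : Set ℕ))) := by
      rw [Set.disjoint_iUnion₂_right]
      intro i hi
      exact Set.disjoint_sdiff_right
    have hVcount : nverts G = 2 + ∑ i ∈ s, ((P i).verts \ ({a, b} : Set ℕ)).ncard := by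
      rw [nverts, hVsets]
      rw [Set.ncard_union_eq hdU (((Set.finite_singleton b).insert a)) hfinU]
      rw [Set.ncard_pair hab]
      congr 1
      rw [aux_ncard_biUnion_eq s _ (fun i hi => ((hPifin i hi).diff)) ?pd]
      case pd =>
        intro i hi i' hi' hne
        rw [Set.disjoint_left]
        intro x hx hx'
        have hmem : x ∈ (P i).verts ∩ (P i').verts := ⟨hx.1, hx'.1⟩
        rw [hsdef, Finset.mem_Ico] at hi hi'
        rw [hdisj i i' hi.1 hi.2 hi'.1 hi'.2 hne] at hmem
        exact hx.2 hmem
    -- edge sets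
    have hEfinPi : ∀ i ∈ s, (P i).edgeSet.Finite :=
      fun i hi => aux_edgeSet_finite (hPifin i hi)
    have habE : ∀ i ∈ s, s(a, b) ∈ (P i).edgeSet := fun i hi => (hI i hi).2.2.2.2.1
    have hEsub : G.edgeSet ⊆ ({s(a, b)} : Set (Sym2 ℕ))
        ∪ ⋃ i ∈ s, ((P i).edgeSet \ {s(a, b)}) := by
      rw [hGedge]
      intro e he
      simp only [Set.mem_iUnion, exists_prop] at he
      obtain ⟨i, hi, he⟩ := he
      by_cases heq : e = s(a, b)
      · exact Set.mem_union_left _ heq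
      · apply Set.mem_union_right
        simp only [Set.mem_iUnion, exists_prop]
        exact ⟨i, (hmems i).mp hi, he, heq⟩
    have hEdiffc : ∀ i ∈ s, ((P i).edgeSet \ ({s(a, b)} : Set (Sym2 ℕ))).ncard + 1
        = nedges (P i) := by
      intro i hi
      have := Set.ncard_diff_add_ncard_of_subset
        (Set.singleton_subset_iff.mpr (habE i hi)) (hEfinPi i hi)
      rwa [Set.ncard_singleton] at this
    have hEcount : nedges G ≤ 1 + ∑ i ∈ s,
        ((P i).edgeSet \ ({s(a, b)} : Set (Sym2 ℕ))).ncard := by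
      calc nedges G ≤ (({s(a, b)} : Set (Sym2 ℕ))
            ∪ ⋃ i ∈ s, ((P i).edgeSet \ {s(a, b)})).ncard :=
            Set.ncard_le_ncard hEsub ((Set.finite_singleton _).union
              (Set.Finite.biUnion s.finite_toSet (fun i hi => (hEfinPi i hi).diff)))
        _ ≤ ({s(a, b)} : Set (Sym2 ℕ)).ncard
            + (⋃ i ∈ s, ((P i).edgeSet \ {s(a, b)})).ncard := Set.ncard_union_le _ _
        _ ≤ 1 + ∑ i ∈ s, ((P i).edgeSet \ ({s(a, b)} : Set (Sym2 ℕ))).ncard := by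
            rw [Set.ncard_singleton]
            exact add_le_add_right (aux_ncard_biUnion_le _ _) 1
    -- real versions
    have hVR : (2 : ℝ) + ∑ i ∈ s, ((nverts (P i) : ℝ) - 2) ≤ (nverts G : ℝ) := by
      have h0 := congrArg (fun n : ℕ => (n : ℝ)) hVcount
      push_cast at h0
      rw [h0]
      have : ∑ i ∈ s, ((nverts (P i) : ℝ) - 2)
          = ∑ i ∈ s, ((((P i).verts \ ({a, b} : Set ℕ)).ncard : ℕ) : ℝ) := by
        apply Finset.sum_congr rfl
        intro i hi
        have h1 := congrArg (fun n : ℕ => (n : ℝ)) (hdiffc i hi)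
        push_cast at h1
        linarith
      rw [this]
    have hER : (nedges G : ℝ) ≤ 1 + ∑ i ∈ s, ((nedges (P i) : ℝ) - 1) := by
      have h0 := (Nat.cast_le (α := ℝ)).mpr hEcount
      push_cast at h0
      refine le_trans h0 ?_
      apply add_le_add_right
      apply Finset.sum_le_sum
      intro i hi
      have h1 := congrArg (fun n : ℕ => (n : ℝ)) (hEdiffc i hi)
      push_cast at h1
      linarith
    -- conclude
    refine ⟨hab, hGfin, ?_, ?_, ?_, ?_⟩
    · rw [hGverts]
      simp only [Set.mem_iUnion, exists_prop]
      exact ⟨1, (hmems 1).mpr h1s, haP1⟩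
    · rw [hGverts]
      simp only [Set.mem_iUnion, exists_prop]
      exact ⟨1, (hmems 1).mpr h1s, hbP1⟩
    · exact (hGadj a b).mpr ⟨1, (hmems 1).mpr h1s, hadjP1⟩
    · intro r hr
      have hMr : 0 < mbar F r := mbar_pos hfin huv (by omega)
      have heF1 : (1 : ℝ) ≤ (nedges F : ℝ) := by
        exact_mod_cast aux_one_le_nedges hfin huv
      have hterm : ∀ i ∈ s, 1 / mbar F (r - i + 1) - 1 / mbar F (r - i)
          ≤ ((nverts (P i) : ℝ) - 2) - ((nedges (P i) : ℝ) - 1) / mbar F r := by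
        intro i hi
        obtain ⟨_, _, _, _, _, hvlow, hehigh, hineq⟩ := hI i hi
        rw [hsdef, Finset.mem_Ico] at hi
        have hji := hj i hi.1 hi.2
        have hIH := hineq r (by omega)
        have hp1 : 0 < mbar F (r - j i + 1) := mbar_pos hfin huv (by omega)
        have hp2 : 0 < mbar F (r - i + 1) := mbar_pos hfin huv (by omega)
        have hp3 : 0 < mbar F (r - i) := mbar_pos hfin huv (by omega)
        have hmono : mbar F (r - i + 1) ≤ mbar F (r - j i + 1) :=
          mbar_mono hfin huv (by omega) (by omega)
        have hinv : 1 / mbar F (r - j i + 1) ≤ 1 / mbar F (r - i + 1) :=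
          one_div_le_one_div_of_le hp2 hmono
        have hkey : (nedges F : ℝ) / mbar F ((r - i) + 1)
            ≤ (nverts F : ℝ) - 2 + 1 / mbar F (r - i) :=
          mbar_key hfin huv (s := r - i) (by omega)
        have h1 : ((nedges (P i) : ℝ) - 1) / mbar F r
            ≤ (((nedges F : ℝ) - 1) * (nedges (Fi i) : ℝ)) / mbar F r := by
          gcongr
          linarith
        have h2 : ((nedges F : ℝ) - 1) * (-(1 / mbar F (r - j i + 1)))
            ≤ ((nedges F : ℝ) - 1) * (((nverts (Fi i) : ℝ) - 2)
              - (nedges (Fi i) : ℝ) / mbar F r) :=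
          mul_le_mul_of_nonneg_left hIH (by linarith)
        have h3 : ((nedges F : ℝ) - 1) * (1 / mbar F (r - j i + 1))
            ≤ ((nedges F : ℝ) - 1) * (1 / mbar F (r - i + 1)) :=
          mul_le_mul_of_nonneg_left hinv (by linarith)
        have harg : (r - i) + 1 = r - i + 1 := rfl
        rw [harg] at hkey
        have hexp : (((nedges F : ℝ) - 1) * (nedges (Fi i) : ℝ)) / mbar F r
            = ((nedges F : ℝ) - 1) * ((nedges (Fi i) : ℝ) / mbar F r) := by ring
        have hfin2 : (nedges F : ℝ) / mbar F (r - i + 1)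
            - ((nedges F : ℝ) - 1) * (1 / mbar F (r - i + 1)) = 1 / mbar F (r - i + 1) := by
          ring
        nlinarith [h1, h2, h3, hkey, hvlow, hehigh]
      have hsum := Finset.sum_le_sum hterm
      have htel : ∑ i ∈ s, (1 / mbar F (r - i + 1) - 1 / mbar F (r - i))
          = 1 / mbar F r - 1 / mbar F (r - k + 1) := by
        have ht := aux_telescope (fun i => 1 / mbar F (r - i + 1)) k (by omega)
        have hcongr : ∑ i ∈ s, (1 / mbar F (r - i + 1) - 1 / mbar F (r - i))
            = ∑ i ∈ s, ((fun i => 1 / mbar F (r - i + 1)) i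
              - (fun i => 1 / mbar F (r - i + 1)) (i + 1)) := by
          apply Finset.sum_congr rfl
          intro i hi
          rw [hsdef, Finset.mem_Ico] at hi
          have : r - (i + 1) + 1 = r - i := by omega
          simp only [this]
        have h2 : (fun i => 1 / mbar F (r - i + 1)) 1 = 1 / mbar F r := by
          show 1 / mbar F (r - 1 + 1) = 1 / mbar F r
          rw [show r - 1 + 1 = r by omega]
        have h3 : (fun i => 1 / mbar F (r - i + 1)) k = 1 / mbar F (r - k + 1) := rfl
        rw [hcongr, hsdef, ht, show r - 1 + 1 = r by omega]
      have hsum2 : ∑ i ∈ s, (((nverts (P i) : ℝ) - 2) - ((nedges (P i) : ℝ) - 1) / mbar F r)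
          = ∑ i ∈ s, ((nverts (P i) : ℝ) - 2)
            - (∑ i ∈ s, ((nedges (P i) : ℝ) - 1)) / mbar F r := by
        rw [Finset.sum_sub_distrib, Finset.sum_div]
      have hdivE : (nedges G : ℝ) / mbar F r
          ≤ (1 + ∑ i ∈ s, ((nedges (P i) : ℝ) - 1)) / mbar F r := by
        gcongr
      calc -(1 / mbar F (r - k + 1))
          = (1 / mbar F r - 1 / mbar F (r - k + 1)) - 1 / mbar F r := by ring
        _ ≤ (∑ i ∈ s, ((nverts (P i) : ℝ) - 2)
            - (∑ i ∈ s, ((nedges (P i) : ℝ) - 1)) / mbar F r) - 1 / mbar F r := by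
            rw [← hsum2]
            linarith [hsum, htel.symm.le, htel.le]
        _ ≤ ((nverts G : ℝ) - 2) - (nedges G : ℝ) / mbar F r := by
            have hx : (1 + ∑ i ∈ s, ((nedges (P i) : ℝ) - 1)) / mbar F r
                = (∑ i ∈ s, ((nedges (P i) : ℝ) - 1)) / mbar F r + 1 / mbar F r := by
              rw [add_div]
              ring
            linarith [hVR, hdivE, hx.le]

end AuxStmt6e

theorem stmt6 (F : Sub ℕ) (hfin : F.verts.Finite) (u v : ℕ) (huv : F.Adj u v)
    (hbal : TwoBalanced F) (htree : ¬ F.coe.IsTree)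
    (hme : m2D (F.deleteEdges {s(u, v)}) ≤ mbar F 2)
    (r k : ℕ) (hk1 : 1 ≤ k) (hkr : k ≤ r)
    (Fs : Sub ℕ) (a b : ℕ) (hFs : InF F u v k Fs a b) :
    -(1 / mbar F (r - k + 1)) ≤ ((nverts Fs : ℝ) - 2) - (nedges Fs : ℝ) / mbar F r :=
  (aux_main hfin huv hFs).2.2.2.2.2 r hkr

end OG
end
end
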